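/- arXiv:1006.3514 — 7 statements merged into one kernel-verified Lean document; each statement's English description precedes it below -/
import Mathlib

section
/- Let d ≥ 1 and δ > 0. For all points s, q ∈ ℝ^d with x := ‖s − q‖ > 0, the mismatch probability satisfies Ψ̄(s, q) ≤ φ(δ/x). -/
open MeasureTheory ProbabilityTheory Real
open scoped ENNReal

noncomputable section

/-- Standard inner product on `Fin d → ℝ`. -/
def dotp {d : ℕ} (a x : Fin d → ℝ) : ℝ := ∑ i, a i * x i

/-- Euclidean norm on `Fin d → ℝ`. -/
def enorm' {d : ℕ} (x : Fin d → ℝ) : ℝ := Real.sqrt (∑ i, x i ^ 2)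

/-- Ternary hash index `⌊(⟨a,p⟩ + b)/δ⌋ mod 4`. -/
def hashIdx {d : ℕ} (δ : ℝ) (a : Fin d → ℝ) (b : ℝ) (p : Fin d → ℝ) : ℤ :=
  ⌊(dotp a p + b) / δ⌋ % 4

/-- `s` and `q` mismatch: one hash index is 0 (ternary symbol `0`) and the other is 2
(ternary symbol `1`). -/
def Mismatch {d : ℕ} (δ : ℝ) (a : Fin d → ℝ) (b : ℝ) (s q : Fin d → ℝ) : Prop :=
  (hashIdx δ a b s = 0 ∧ hashIdx δ a b q = 2) ∨ (hashIdx δ a b s = 2 ∧ hashIdx δ a b q = 0)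

/-- Product of `d` i.i.d. standard Gaussians: the law of `a`. -/
def gaussPi (d : ℕ) : Measure (Fin d → ℝ) := Measure.pi fun _ => gaussianReal 0 1

/-- Uniform probability measure on the interval `(0, 2δ)`: the law of `b`. -/
def unifB (δ : ℝ) : Measure ℝ :=
  (ENNReal.ofReal (2 * δ))⁻¹ • volume.restrict (Set.Ioo 0 (2 * δ))

/-- Joint law of the independent pair `(a, b)`. -/
def jointμ (d : ℕ) (δ : ℝ) : Measure ((Fin d → ℝ) × ℝ) := (gaussPi d).prod (unifB δ)

/-- Mismatch probability `Ψ̄(s,q)` over the random pair `(a, b)`. -/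
def PsiBar (d : ℕ) (δ : ℝ) (s q : Fin d → ℝ) : ℝ≥0∞ :=
  jointμ d δ {ab : (Fin d → ℝ) × ℝ | Mismatch δ ab.1 ab.2 s q}

/-- Complementary cdf `F̄` of the standard normal distribution. -/
def Fbar (y : ℝ) : ℝ := ∫ t in Set.Ioi y, (1 / Real.sqrt (2 * π)) * Real.exp (-t ^ 2 / 2)

/-- The function `φ(y) = e^{-y²/2}/(y√(2π)) - F̄(y)`. -/
def phi (y : ℝ) : ℝ := Real.exp (-y ^ 2 / 2) / (y * Real.sqrt (2 * π)) - Fbar y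

/-- One-dimensional ternary hash index `⌊(u + b)/δ⌋ mod 4`. -/
def jb (δ b u : ℝ) : ℤ := ⌊(u + b) / δ⌋ % 4

/-- One-dimensional mismatch: one index is 0 and the other is 2. -/
def Mismatch1 (δ b u v : ℝ) : Prop :=
  (jb δ b u = 0 ∧ jb δ b v = 2) ∨ (jb δ b u = 2 ∧ jb δ b v = 0)

/-- One-dimensional mismatch probability `ψ̄(u,v)` over `b` uniform on `(0, 2δ)`. -/
def psiBar (δ u v : ℝ) : ℝ≥0∞ := unifB δ {b | Mismatch1 δ b u v}


open scoped NNReal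

lemma window_measure (c θ : ℝ) (hθ0 : 0 ≤ θ) (hθ1 : θ ≤ 1) :
    volume {x : ℝ | x ∈ Set.Ioo c (c+2) ∧ Even ⌊x⌋ ∧ θ ≤ Int.fract x}
      ≤ ENNReal.ofReal (1 - θ) := by
  set k : ℤ := ⌊c⌋ with hk
  have hck : (k:ℝ) ≤ c := Int.floor_le c
  have hck' : c < k + 1 := Int.lt_floor_add_one c
  have hsub : ∀ x ∈ {x : ℝ | x ∈ Set.Ioo c (c+2) ∧ Even ⌊x⌋ ∧ θ ≤ Int.fract x},
      (⌊x⌋ = k ∨ ⌊x⌋ = k + 1 ∨ ⌊x⌋ = k + 2) := by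
    intro x hx
    obtain ⟨⟨h1, h2⟩, _, _⟩ := hx
    have hl : k ≤ ⌊x⌋ := Int.floor_le_floor h1.le
    have hu : ⌊x⌋ < k + 3 := by
      rw [Int.floor_lt]; push_cast; linarith
    omega
  rcases Int.even_or_odd k with hke | hko
  · have hss : {x : ℝ | x ∈ Set.Ioo c (c+2) ∧ Even ⌊x⌋ ∧ θ ≤ Int.fract x}
        ⊆ Set.Ico (max c ((k:ℝ)+θ)) ((k:ℝ)+1) ∪ Set.Ico ((k:ℝ)+2+θ) (c+2) := by
      intro x hx
      obtain ⟨⟨h1, h2⟩, hev, hfr⟩ := hx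
      have hfl := hsub x ⟨⟨h1,h2⟩, hev, hfr⟩
      have hxe : x = (⌊x⌋:ℝ) + Int.fract x := (Int.floor_add_fract x).symm
      have hfr1 : Int.fract x < 1 := Int.fract_lt_one x
      rcases hfl with h | h | h
      · left
        refine ⟨max_le h1.le ?_, ?_⟩
        · rw [hxe, h]; push_cast; linarith
        · rw [hxe, h]; push_cast; linarith
      · exfalso
        rw [h] at hev
        exact (Int.even_add_one.mp hev) hke
      · exact Or.inr ⟨by rw [hxe, h]; push_cast; linarith, h2⟩
    refine (measure_mono hss).trans ((measure_union_le _ _).trans ?_)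
    rw [Real.volume_Ico, Real.volume_Ico]
    rcases le_or_gt c ((k:ℝ)+θ) with hcase | hcase
    · rw [max_eq_right hcase]
      have h2 : ENNReal.ofReal (c + 2 - ((k:ℝ)+2+θ)) = 0 := by
        rw [ENNReal.ofReal_eq_zero]; linarith
      rw [h2, add_zero]
      apply ENNReal.ofReal_le_ofReal; linarith
    · rw [max_eq_left hcase.le, ← ENNReal.ofReal_add (by linarith) (by linarith)]
      apply ENNReal.ofReal_le_ofReal; linarith
  · have hss : {x : ℝ | x ∈ Set.Ioo c (c+2) ∧ Even ⌊x⌋ ∧ θ ≤ Int.fract x}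
        ⊆ Set.Ico ((k:ℝ)+1+θ) ((k:ℝ)+2) := by
      intro x hx
      obtain ⟨⟨h1, h2⟩, hev, hfr⟩ := hx
      have hfl := hsub x ⟨⟨h1,h2⟩, hev, hfr⟩
      have hxe : x = (⌊x⌋:ℝ) + Int.fract x := (Int.floor_add_fract x).symm
      have hfr1 : Int.fract x < 1 := Int.fract_lt_one x
      rcases hfl with h | h | h
      · exfalso; rw [h] at hev; exact (Int.not_even_iff_odd.mpr hko) hev
      · refine ⟨by rw [hxe, h]; push_cast; linarith, by rw [hxe, h]; push_cast; linarith⟩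
      · exfalso; rw [h] at hev
        have : Odd (k+2) := by exact hko.add_even (by decide)
        exact (Int.not_even_iff_odd.mpr this) hev
    refine (measure_mono hss).trans ?_
    rw [Real.volume_Ico]
    apply ENNReal.ofReal_le_ofReal; linarith


-- floor difference facts
lemma floor_add_cases (β r : ℝ) :
    ⌊β + r⌋ = ⌊β⌋ + ⌊r⌋ ∨ (⌊β + r⌋ = ⌊β⌋ + ⌊r⌋ + 1 ∧ 1 ≤ Int.fract β + Int.fract r) := by
  have h1 : ⌊β⌋ + ⌊r⌋ ≤ ⌊β + r⌋ := by
    rw [Int.le_floor]; push_cast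
    exact add_le_add (Int.floor_le β) (Int.floor_le r)
  have h2 : ⌊β + r⌋ < ⌊β⌋ + ⌊r⌋ + 2 := by
    rw [Int.floor_lt]; push_cast
    have := Int.lt_floor_add_one β
    have := Int.lt_floor_add_one r
    linarith
  rcases eq_or_lt_of_le h1 with h | h
  · exact Or.inl h.symm
  · refine Or.inr ⟨by omega, ?_⟩
    have : ((⌊β⌋ + ⌊r⌋ + 1 : ℤ) : ℝ) ≤ β + r := by
      rw [← Int.le_floor] at *; omega
    have hb := Int.floor_add_fract β
    have hr := Int.floor_add_fract r
    push_cast at this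
    linarith

lemma mismatch1_subset (δ u v : ℝ) (hδ : 0 < δ) (hr : 1 < (u - v)/δ) :
    {b : ℝ | Mismatch1 δ b u v} ⊆
      (fun b => (v+b)/δ) ⁻¹' {x : ℝ | Even ⌊x⌋ ∧ max (2 - (u-v)/δ) 0 ≤ Int.fract x} := by
  set r : ℝ := (u - v)/δ with hrdef
  intro b hb
  have hkey : (u + b)/δ = (v+b)/δ + r := by
    rw [hrdef, ← add_div]; ring_nf
  set β : ℝ := (v+b)/δ with hβ
  have hm : ⌊(u+b)/δ⌋ = ⌊β + r⌋ := by rw [hkey]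
  have hmn : (⌊β + r⌋ % 4 = 0 ∧ ⌊β⌋ % 4 = 2) ∨ (⌊β + r⌋ % 4 = 2 ∧ ⌊β⌋ % 4 = 0) := by
    rcases hb with ⟨h1, h2⟩ | ⟨h1, h2⟩
    · exact Or.inl ⟨by rw [← hm]; exact h1, h2⟩
    · exact Or.inr ⟨by rw [← hm]; exact h1, h2⟩
  have heven : Even ⌊β⌋ := by
    rw [Int.even_iff]; omega
  refine ⟨heven, ?_⟩
  rcases le_or_gt 2 r with h2r | h2r
  · have : max (2 - r) 0 = 0 := by
      apply max_eq_right; linarith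
    rw [this]; exact (Int.fract_nonneg β)
  · -- 1 < r < 2 : ⌊r⌋ = 1
    have hfr : ⌊r⌋ = 1 := by
      have : (1:ℤ) ≤ ⌊r⌋ := by rw [Int.le_floor]; push_cast; linarith
      have : ⌊r⌋ < 2 := by rw [Int.floor_lt]; push_cast; linarith
      omega
    have hdiff : ⌊β + r⌋ - ⌊β⌋ = 2 := by
      rcases floor_add_cases β r with h | ⟨h, _⟩ <;> omega
    have hcase := floor_add_cases β r
    rcases hcase with h | ⟨h, hfract⟩
    · omega
    · have hfractr : Int.fract r = r - 1 := by
        rw [Int.fract]; rw [hfr]; push_cast; ring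
      have : max (2 - r) 0 = 2 - r := by apply max_eq_left; linarith
      rw [this]
      rw [hfractr] at hfract
      linarith

lemma mismatch1_empty (δ u v : ℝ) (hδ : 0 < δ) (hr : |(u - v)/δ| ≤ 1) :
    {b : ℝ | Mismatch1 δ b u v} = ∅ := by
  set r : ℝ := (u - v)/δ with hrdef
  rw [abs_le] at hr
  ext b
  simp only [Set.mem_setOf_eq, Set.mem_empty_iff_false, iff_false]
  intro hb
  have hkey : (u + b)/δ = (v+b)/δ + r := by
    rw [hrdef, ← add_div]; ring_nf
  set β : ℝ := (v+b)/δ with hβ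
  have hm : ⌊(u+b)/δ⌋ = ⌊β + r⌋ := by rw [hkey]
  have hmn : (⌊β + r⌋ % 4 = 0 ∧ ⌊β⌋ % 4 = 2) ∨ (⌊β + r⌋ % 4 = 2 ∧ ⌊β⌋ % 4 = 0) := by
    rcases hb with ⟨h1, h2⟩ | ⟨h1, h2⟩
    · exact Or.inl ⟨by rw [← hm]; exact h1, h2⟩
    · exact Or.inr ⟨by rw [← hm]; exact h1, h2⟩
  have hfl : (-1:ℤ) ≤ ⌊r⌋ := by
    rw [Int.le_floor]; push_cast; linarith [hr.1]
  have hfu : ⌊r⌋ ≤ 1 := by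
    have h := Int.floor_le_floor hr.2
    simpa using h
  rcases floor_add_cases β r with h | ⟨h, hfract⟩
  · omega
  · -- need ⌊r⌋ = 1 case impossible: then fract r = r - 1 ≤ 0 with fract β < 1
    have hd2 : ⌊r⌋ = 1 := by omega
    have hfractr : Int.fract r = r - 1 := by
      rw [Int.fract, hd2]; push_cast; ring
    have := Int.fract_lt_one β
    rw [hfractr] at hfract
    have : r ≤ 1 := hr.2
    linarith [Int.fract_lt_one β]


lemma unifB_apply (δ : ℝ) (S : Set ℝ) :
    unifB δ S = (ENNReal.ofReal (2 * δ))⁻¹ * volume (S ∩ Set.Ioo 0 (2*δ)) := by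
  rw [unifB, Measure.smul_apply, Measure.restrict_apply' measurableSet_Ioo, smul_eq_mul]

-- the one-sided bound, assuming u ≥ v
lemma psiBar_bound_aux (δ u v : ℝ) (hδ : 0 < δ) (huv : v ≤ u) :
    unifB δ {b | Mismatch1 δ b u v} ≤ ENNReal.ofReal (max ((u-v)/δ - 1) 0 / 2) := by
  set r : ℝ := (u - v)/δ with hrdef
  have hr0 : 0 ≤ r := div_nonneg (by linarith) hδ.le
  rcases le_or_gt r 1 with hr1 | hr1
  · rw [unifB_apply, mismatch1_empty δ u v hδ (by rw [abs_of_nonneg hr0]; exact hr1)]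
    simp
  · -- 1 < r
    set θ : ℝ := max (2 - r) 0 with hθdef
    have hθ0 : 0 ≤ θ := le_max_right _ _
    have hθ1 : θ ≤ 1 := by
      apply max_le (by linarith) (by norm_num)
    set c : ℝ := v/δ with hc
    have hwin : c + 2 = (v + 2*δ)/δ := by rw [hc]; field_simp
    have hsub2 : {b | Mismatch1 δ b u v} ∩ Set.Ioo 0 (2*δ) ⊆
        (fun b => (v+b)/δ) ⁻¹' {x : ℝ | x ∈ Set.Ioo c (c+2) ∧ Even ⌊x⌋ ∧ θ ≤ Int.fract x} := by
      intro b ⟨hb1, hb2⟩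
      have h1 := mismatch1_subset δ u v hδ hr1 hb1
      refine ⟨⟨?_, ?_⟩, h1⟩
      · exact (div_lt_div_iff_of_pos_right hδ).mpr (by linarith [hb2.1])
      · rw [hwin]
        exact (div_lt_div_iff_of_pos_right hδ).mpr (by linarith [hb2.2])
    have hpre : ∀ W : Set ℝ, volume ((fun b => (v+b)/δ) ⁻¹' W) = ENNReal.ofReal δ * volume W := by
      intro W
      have hfe : (fun b : ℝ => (v+b)/δ) = (fun x : ℝ => δ⁻¹ * x) ∘ (fun b : ℝ => v + b) := by
        funext b; simp [div_eq_inv_mul, Function.comp]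
      rw [hfe, Set.preimage_comp]
      rw [measure_preimage_add]
      rw [Real.volume_preimage_mul_left (inv_ne_zero hδ.ne')]
      congr 1
      rw [inv_inv, abs_of_pos hδ]
    calc unifB δ {b | Mismatch1 δ b u v}
        = (ENNReal.ofReal (2 * δ))⁻¹ * volume ({b | Mismatch1 δ b u v} ∩ Set.Ioo 0 (2*δ)) :=
          unifB_apply _ _
      _ ≤ (ENNReal.ofReal (2 * δ))⁻¹ *
            volume ((fun b => (v+b)/δ) ⁻¹' {x : ℝ | x ∈ Set.Ioo c (c+2) ∧ Even ⌊x⌋ ∧ θ ≤ Int.fract x}) := by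
          gcongr ?_ * ?_
          · exact le_rfl
          · exact measure_mono hsub2
      _ = (ENNReal.ofReal (2 * δ))⁻¹ * (ENNReal.ofReal δ *
            volume {x : ℝ | x ∈ Set.Ioo c (c+2) ∧ Even ⌊x⌋ ∧ θ ≤ Int.fract x}) := by
          rw [hpre _]
      _ ≤ (ENNReal.ofReal (2 * δ))⁻¹ * (ENNReal.ofReal δ * ENNReal.ofReal (1 - θ)) := by
          gcongr
          exact window_measure c θ hθ0 hθ1
      _ ≤ ENNReal.ofReal (max (r - 1) 0 / 2) := by
          rw [← ENNReal.ofReal_mul hδ.le]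
          rw [← ENNReal.div_eq_inv_mul]
          apply ENNReal.div_le_of_le_mul
          rw [← ENNReal.ofReal_mul (by positivity)]
          apply ENNReal.ofReal_le_ofReal
          have h1θ : 1 - θ ≤ r - 1 := by
            rcases max_cases (2 - r) 0 with ⟨h, _⟩ | ⟨h, _⟩ <;> rw [hθdef, h] <;> linarith
          have hmax : max (r - 1) 0 = r - 1 := max_eq_left (by linarith)
          rw [hmax]
          nlinarith [hδ.le]

lemma Mismatch1_comm (δ b u v : ℝ) : Mismatch1 δ b u v ↔ Mismatch1 δ b v u := by
  unfold Mismatch1; tauto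

lemma psiBar_bound (δ u v : ℝ) (hδ : 0 < δ) :
    unifB δ {b | Mismatch1 δ b u v} ≤ ENNReal.ofReal (max (|u-v|/δ - 1) 0 / 2) := by
  rcases le_total v u with h | h
  · rw [abs_of_nonneg (by linarith)]
    exact psiBar_bound_aux δ u v hδ h
  · rw [abs_of_nonpos (by linarith)]
    have hset : {b | Mismatch1 δ b u v} = {b | Mismatch1 δ b v u} := by
      ext b; exact Mismatch1_comm δ b u v
    rw [hset]
    have : -(u - v) = v - u := by ring
    rw [this]
    exact psiBar_bound_aux δ v u hδ h


-- pointwise product identity for Gaussian pdfs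
lemma gaussianPDFReal_mul_ident (v₁ v₂ : ℝ≥0) (hv₁ : v₁ ≠ 0) (hv₂ : v₂ ≠ 0) (x y : ℝ) :
    gaussianPDFReal x v₂ y * gaussianPDFReal 0 v₁ x =
      gaussianPDFReal 0 (v₁ + v₂) y *
        gaussianPDFReal (y * v₁ / (v₁ + v₂)) (v₁ * v₂ / (v₁ + v₂)) x := by
  have h1 : (0:ℝ) < v₁ := lt_of_le_of_ne (v₁.coe_nonneg) (by exact_mod_cast (Ne.symm hv₁))
  have h2 : (0:ℝ) < v₂ := lt_of_le_of_ne (v₂.coe_nonneg) (by exact_mod_cast (Ne.symm hv₂))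
  have h12 : (0:ℝ) < (v₁:ℝ) + v₂ := by linarith
  have hπ : (0:ℝ) < 2 * π := by positivity
  unfold gaussianPDFReal
  push_cast
  -- casts handled by push_cast
  -- constants
  have hconst : (√(2 * π * v₂))⁻¹ * (√(2 * π * v₁))⁻¹
      = (√(2 * π * ((v₁:ℝ) + v₂)))⁻¹ * (√(2 * π * ((v₁:ℝ) * v₂ / ((v₁:ℝ) + v₂))))⁻¹ := by
    rw [← mul_inv, ← mul_inv, ← Real.sqrt_mul (by positivity), ← Real.sqrt_mul (by positivity)]
    congr 1
    field_simp
  -- exponents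
  have hexp : -(y - x)^2 / (2 * v₂) + (-(x - 0)^2 / (2 * v₁))
      = -(y - 0)^2 / (2 * ((v₁:ℝ) + v₂)) +
        (-(x - y * v₁ / ((v₁:ℝ) + v₂))^2 / (2 * ((v₁:ℝ) * v₂ / ((v₁:ℝ) + v₂)))) := by
    field_simp
    ring
  calc (√(2 * π * v₂))⁻¹ * rexp (-(y - x)^2 / (2 * v₂)) *
        ((√(2 * π * v₁))⁻¹ * rexp (-(x - 0)^2 / (2 * v₁)))
      = ((√(2 * π * v₂))⁻¹ * (√(2 * π * v₁))⁻¹) *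
          rexp (-(y - x)^2 / (2 * v₂) + (-(x - 0)^2 / (2 * v₁))) := by
        rw [Real.exp_add]; ring
    _ = _ := by
        rw [hconst, hexp, Real.exp_add]; ring

lemma measurable_gaussian_kernel (v₂ : ℝ≥0) :
    Measurable (fun p : ℝ × ℝ => gaussianPDF p.1 v₂ p.2) := by
  unfold gaussianPDF gaussianPDFReal
  apply ENNReal.measurable_ofReal.comp
  fun_prop

lemma gaussianReal_conv (v₁ v₂ : ℝ≥0) :
    Measure.map (fun p : ℝ × ℝ => p.1 + p.2)
      ((gaussianReal 0 v₁).prod (gaussianReal 0 v₂)) = gaussianReal 0 (v₁ + v₂) := by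
  by_cases hv₁ : v₁ = 0
  · subst hv₁
    rw [gaussianReal_zero_var, Measure.dirac_prod, Measure.map_map (by fun_prop) (by fun_prop)]
    have h : ((fun p : ℝ × ℝ => p.1 + p.2) ∘ (Prod.mk (0:ℝ))) = id := by
      funext y; simp [Function.comp]
    rw [h, Measure.map_id, zero_add]
  by_cases hv₂ : v₂ = 0
  · subst hv₂
    rw [gaussianReal_zero_var, Measure.prod_dirac, Measure.map_map (by fun_prop) (by fun_prop)]
    have h : ((fun p : ℝ × ℝ => p.1 + p.2) ∘ (fun x : ℝ => (x, (0:ℝ)))) = id := by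
      funext y; simp [Function.comp]
    rw [h, Measure.map_id, add_zero]
  -- main case
  have hv12 : v₁ + v₂ ≠ 0 := by
    intro h
    exact hv₁ (by simpa using (add_eq_zero.mp h).1)
  have hv' : v₁ * v₂ / (v₁ + v₂) ≠ 0 := by
    rw [div_ne_zero_iff]
    exact ⟨mul_ne_zero hv₁ hv₂, hv12⟩
  ext s hs
  rw [Measure.map_apply (by fun_prop) hs]
  rw [Measure.prod_apply (show MeasurableSet ((fun p : ℝ × ℝ => p.1 + p.2) ⁻¹' s) from (measurable_fst.add measurable_snd) hs)]
  have hsec : ∀ x : ℝ, (Prod.mk x ⁻¹' ((fun p : ℝ × ℝ => p.1 + p.2) ⁻¹' s))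
      = (fun y => x + y) ⁻¹' s := fun x => rfl
  have hstep1 : ∀ x : ℝ, gaussianReal 0 v₂ ((fun y => x + y) ⁻¹' s)
      = ∫⁻ y in s, gaussianPDF x v₂ y := by
    intro x
    rw [← Measure.map_apply (by fun_prop) hs, gaussianReal_map_const_add, zero_add,
      gaussianReal_apply x hv₂ s]
  simp_rw [hsec, hstep1]
  rw [gaussianReal_of_var_ne_zero _ hv₁]
  rw [lintegral_withDensity_eq_lintegral_mul _ (measurable_gaussianPDF _ _) ?hF]
  case hF =>
    apply Measurable.lintegral_prod_right (f := fun x y => gaussianPDF x v₂ y)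
    exact measurable_gaussian_kernel v₂
  simp_rw [Pi.mul_apply]
  have hswap : ∫⁻ x, gaussianPDF 0 v₁ x * ∫⁻ y in s, gaussianPDF x v₂ y
      = ∫⁻ x, ∫⁻ y in s, gaussianPDF 0 v₁ x * gaussianPDF x v₂ y := by
    congr 1; funext x
    rw [lintegral_const_mul _ (measurable_gaussianPDF x v₂)]
  rw [hswap]
  rw [lintegral_lintegral_swap ?hAE]
  case hAE =>
    apply Measurable.aemeasurable
    exact ((measurable_gaussianPDF 0 v₁).comp measurable_fst).mul (measurable_gaussian_kernel v₂)
  have hinner : ∀ y : ℝ, ∫⁻ x, gaussianPDF 0 v₁ x * gaussianPDF x v₂ y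
      = gaussianPDF 0 (v₁ + v₂) y := by
    intro y
    have hpt : ∀ x : ℝ, gaussianPDF 0 v₁ x * gaussianPDF x v₂ y
        = gaussianPDF 0 (v₁ + v₂) y * gaussianPDF (y * v₁ / (v₁ + v₂)) (v₁ * v₂ / (v₁ + v₂)) x := by
      intro x
      unfold gaussianPDF
      rw [← ENNReal.ofReal_mul (gaussianPDFReal_nonneg _ _ _),
        ← ENNReal.ofReal_mul (gaussianPDFReal_nonneg _ _ _)]
      congr 1
      rw [mul_comm]
      exact gaussianPDFReal_mul_ident v₁ v₂ hv₁ hv₂ x y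
    simp_rw [hpt]
    rw [lintegral_const_mul _ (measurable_gaussianPDF _ _)]
    rw [lintegral_gaussianPDF_eq_one _ hv', mul_one]
  simp_rw [hinner]
  rw [← gaussianReal_apply 0 hv12 s]


instance (d : ℕ) : IsProbabilityMeasure (gaussPi d) := by
  unfold gaussPi; infer_instance

lemma dotp_law : ∀ (n : ℕ) (w : Fin n → ℝ),
    Measure.map (fun a : Fin n → ℝ => ∑ i, w i * a i) (gaussPi n)
      = gaussianReal 0 (∑ i, w i ^ 2).toNNReal := by
  intro n
  induction n with
  | zero =>
    intro w
    have h0 : (fun a : Fin 0 → ℝ => ∑ i, w i * a i) = fun _ => (0:ℝ) := by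
      funext a; simp
    rw [h0, Measure.map_const]
    simp [gaussianReal_zero_var]
  | succ n ih =>
    intro w
    unfold gaussPi at ih ⊢
    set e := MeasurableEquiv.piFinSuccAbove (fun _ : Fin (n+1) => ℝ) 0 with he
    have hmp := measurePreserving_piFinSuccAbove (fun _ : Fin (n+1) => gaussianReal 0 1) 0
    set w' : Fin n → ℝ := fun j => w j.succ with hw'
    have hg : (fun a : Fin (n+1) → ℝ => ∑ i, w i * a i)
        = (fun p : ℝ × ℝ => p.1 + p.2) ∘
          (Prod.map (fun x : ℝ => w 0 * x) (fun c : Fin n → ℝ => ∑ j, w' j * c j)) ∘ e := by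
      funext a
      simp only [Function.comp_apply, Prod.map_apply, he,
        MeasurableEquiv.piFinSuccAbove_apply, Fin.insertNthEquiv,
        Equiv.coe_fn_symm_mk, Fin.zero_succAbove, hw']
      rw [Fin.sum_univ_succ]
      congr 1
    rw [hg, ← Function.comp_assoc]
    rw [← Measure.map_map (by fun_prop) e.measurable]
    rw [hmp.map_eq]
    rw [← Measure.map_map (by fun_prop) (by fun_prop)]
    rw [← Measure.map_prod_map _ _ (by fun_prop) (by fun_prop)]
    have h1 : Measure.map (fun x : ℝ => w 0 * x) (gaussianReal 0 1)
        = gaussianReal 0 (NNReal.mk (w 0 ^ 2) (sq_nonneg _)) := by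
      rw [gaussianReal_map_const_mul]
      congr 1 <;> simp
    have h2 : Measure.map (fun c : Fin n → ℝ => ∑ j, w' j * c j)
        (Measure.pi fun _ : Fin n => gaussianReal 0 1) = gaussianReal 0 (∑ i, w' i ^ 2).toNNReal := by
      exact ih w'
    rw [h1, h2, gaussianReal_conv]
    congr 1
    ext
    push_cast
    rw [Real.coe_toNNReal _ (by positivity), Real.coe_toNNReal _ (by positivity)]
    rw [Fin.sum_univ_succ]


-- tail integral of t * exp(-t^2/2)
lemma integral_tail_texp (y : ℝ) :
    ∫ t in Set.Ioi y, t * Real.exp (-t^2/2) = Real.exp (-y^2/2) := by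
  have h1 : ∀ t ∈ Set.Ioi y, HasDerivAt (fun t => -Real.exp (-t^2/2))
      (t * Real.exp (-t^2/2)) t := by
    intro t _
    have h : HasDerivAt (fun t : ℝ => -t^2/2) (-t) t := by
      have := (hasDerivAt_pow 2 t).div_const 2
      have h2 := this.neg
      have hf : (-fun x : ℝ => x ^ 2 / 2) = fun t : ℝ => -t^2/2 := by funext u; simp only [Pi.neg_apply]; ring
      rw [hf] at h2
      exact h2.congr_deriv (by norm_num)
    have := (h.exp).neg
    exact this.congr_deriv (by ring)
  have hInt : IntegrableOn (fun t => t * Real.exp (-t^2/2)) (Set.Ioi y) := by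
    have : Integrable (fun t : ℝ => t * Real.exp (-(1/2) * t^2)) :=
      integrable_mul_exp_neg_mul_sq (by norm_num)
    have h2 : (fun t : ℝ => t * Real.exp (-t^2/2)) = fun t : ℝ => t * Real.exp (-(1/2) * t^2) := by
      funext t; congr 1; ring_nf
    rw [h2]
    exact this.integrableOn
  have hTend : Filter.Tendsto (fun t => -Real.exp (-t^2/2)) Filter.atTop (nhds 0) := by
    rw [← neg_zero]
    apply Filter.Tendsto.neg
    apply Real.tendsto_exp_atBot.comp
    have h3 : Filter.Tendsto (fun x : ℝ => x^2/2) Filter.atTop Filter.atTop := by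
      apply Filter.Tendsto.atTop_div_const (by norm_num)
      exact Filter.tendsto_pow_atTop (by norm_num)
    have h4 := Filter.tendsto_neg_atTop_atBot.comp h3
    convert h4 using 2 with x
    simp [Function.comp]
    ring
  have := integral_Ioi_of_hasDerivAt_of_tendsto
    (f := fun t => -Real.exp (-t^2/2)) (f' := fun t => t * Real.exp (-t^2/2))
    (a := y) (m := 0) ?_ h1 hInt hTend
  · rw [this]; ring_nf
  · exact (Real.continuous_exp.comp (by continuity)).neg.continuousWithinAt

lemma integrable_H (y : ℝ) (hy : 0 < y) (c : ℝ) (hc : 0 ≤ c) :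
    Integrable (fun t : ℝ => c * Real.exp (-t^2/2) * (max (t/y - 1) 0 / 2)) := by
  have hmaj : Integrable (fun t : ℝ => (c/(2*y)) * |t * Real.exp (-(1/2) * t^2)|) := by
    exact ((integrable_mul_exp_neg_mul_sq (by norm_num : (0:ℝ) < 1/2)).abs).const_mul _
  apply hmaj.mono'
  · apply Continuous.aestronglyMeasurable
    continuity
  · refine Filter.Eventually.of_forall (fun t => ?_)
    have he : (0:ℝ) < Real.exp (-t^2/2) := Real.exp_pos _
    have habs : |t * Real.exp (-(1/2) * t^2)| = |t| * Real.exp (-t^2/2) := by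
      rw [abs_mul, abs_of_pos (Real.exp_pos _)]
      congr 2
      ring
    rw [habs]
    have hG0 : 0 ≤ max (t/y - 1) 0 / 2 := by positivity
    rw [Real.norm_eq_abs, abs_of_nonneg (by positivity)]
    have hGle : max (t/y - 1) 0 / 2 ≤ |t| / (2*y) := by
      rcases max_cases (t/y - 1) 0 with ⟨h, h2⟩ | ⟨h, h2⟩ <;> rw [h]
      · have : t / y ≤ |t| / y := by gcongr; exact le_abs_self t
        calc (t/y - 1)/2 ≤ (t/y)/2 := by linarith
          _ ≤ (|t|/y)/2 := by linarith
          _ = |t|/(2*y) := by ring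
      · rw [zero_div]; positivity
    calc c * Real.exp (-t^2/2) * (max (t/y - 1) 0 / 2)
        ≤ c * Real.exp (-t^2/2) * (|t|/(2*y)) := by
          apply mul_le_mul_of_nonneg_left hGle (by positivity)
      _ = c/(2*y) * (|t| * Real.exp (-t^2/2)) := by ring

lemma integral_H (y : ℝ) (hy : 0 < y) :
    ∫ z : ℝ, gaussianPDFReal 0 1 z * (max (|z|/y - 1) 0 / 2) = phi y := by
  set c : ℝ := (Real.sqrt (2 * π))⁻¹ with hc
  have hc0 : 0 ≤ c := by positivity
  have hpdf : ∀ z : ℝ, gaussianPDFReal 0 1 z = c * Real.exp (-z^2/2) := by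
    intro z
    unfold gaussianPDFReal
    rw [hc]
    push_cast
    rw [mul_one, mul_one, sub_zero]
  have hHabs : ∀ z : ℝ, gaussianPDFReal 0 1 z * (max (|z|/y - 1) 0 / 2)
      = (fun t => c * Real.exp (-t^2/2) * (max (t/y - 1) 0 / 2)) |z| := by
    intro z
    rw [hpdf]
    simp only [sq_abs]
  simp_rw [hHabs]
  rw [integral_comp_abs (f := fun t => c * Real.exp (-t^2/2) * (max (t/y - 1) 0 / 2))]
  have hIH := integrable_H y hy c hc0
  -- split Ioi 0 = Ioc 0 y ∪ Ioi y
  have hsplit : (Set.Ioi (0:ℝ)) = Set.Ioc 0 y ∪ Set.Ioi y := (Set.Ioc_union_Ioi_eq_Ioi hy.le).symm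
  rw [hsplit, setIntegral_union (Set.Ioc_disjoint_Ioi le_rfl) measurableSet_Ioi
    hIH.integrableOn hIH.integrableOn]
  have hzero : ∫ t in Set.Ioc 0 y, c * Real.exp (-t^2/2) * (max (t/y - 1) 0 / 2) = 0 := by
    rw [setIntegral_congr_fun measurableSet_Ioc (g := fun _ => (0:ℝ))]
    · exact integral_zero _ _
    · intro t ht
      have : t / y ≤ 1 := (div_le_one hy).mpr ht.2
      have : max (t/y - 1) 0 = 0 := max_eq_right (by linarith)
      simp [this]
  rw [hzero, zero_add]
  have hcong : ∫ t in Set.Ioi y, c * Real.exp (-t^2/2) * (max (t/y - 1) 0 / 2)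
      = ∫ t in Set.Ioi y, (c/(2*y) * (t * Real.exp (-t^2/2)) - c/2 * Real.exp (-t^2/2)) := by
    apply setIntegral_congr_fun measurableSet_Ioi
    intro t ht
    have hty : 1 < t / y := (one_lt_div hy).mpr ht
    have hm : max (t/y - 1) 0 = t/y - 1 := max_eq_left (by linarith)
    beta_reduce
    rw [hm]
    field_simp
  rw [hcong]
  have hint1 : IntegrableOn (fun t : ℝ => c/(2*y) * (t * Real.exp (-t^2/2))) (Set.Ioi y) := by
    apply Integrable.const_mul
    have : Integrable (fun t : ℝ => t * Real.exp (-(1/2) * t^2)) :=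
      integrable_mul_exp_neg_mul_sq (by norm_num)
    have h2 : (fun t : ℝ => t * Real.exp (-t^2/2)) = fun t : ℝ => t * Real.exp (-(1/2) * t^2) := by
      funext t; congr 1; ring_nf
    rw [h2]
    exact this.integrableOn
  have hint2 : IntegrableOn (fun t : ℝ => c/2 * Real.exp (-t^2/2)) (Set.Ioi y) := by
    apply Integrable.const_mul
    have : Integrable (fun t : ℝ => Real.exp (-(1/2) * t^2)) :=
      integrable_exp_neg_mul_sq (by norm_num)
    have h2 : (fun t : ℝ => Real.exp (-t^2/2)) = fun t : ℝ => Real.exp (-(1/2) * t^2) := by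
      funext t; congr 1; ring_nf
    rw [h2]
    exact this.integrableOn
  rw [integral_sub hint1 hint2, integral_const_mul, integral_const_mul, integral_tail_texp]
  unfold phi Fbar
  have hFbar : ∫ t in Set.Ioi y, 1 / Real.sqrt (2*π) * Real.exp (-t^2/2)
      = c * ∫ t in Set.Ioi y, Real.exp (-t^2/2) := by
    rw [← integral_const_mul]
    congr 1
    funext t
    rw [hc, one_div]
  rw [hFbar, hc]
  have hs : Real.sqrt (2*π) ≠ 0 := by positivity
  field_simp

lemma integrable_pdfG (y : ℝ) (hy : 0 < y) :
    Integrable (fun z : ℝ => gaussianPDFReal 0 1 z * (max (|z|/y - 1) 0 / 2)) := by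
  have hmaj : Integrable (fun t : ℝ => ((Real.sqrt (2*π))⁻¹/(2*y)) * |t * Real.exp (-(1/2) * t^2)|) :=
    ((integrable_mul_exp_neg_mul_sq (by norm_num : (0:ℝ) < 1/2)).abs).const_mul _
  apply hmaj.mono'
  · exact ((measurable_gaussianPDFReal 0 1).mul
      ((((measurable_id.abs.div_const y).sub_const 1).max measurable_const).div_const 2)).aestronglyMeasurable
  · refine Filter.Eventually.of_forall (fun t => ?_)
    set c : ℝ := (Real.sqrt (2 * π))⁻¹ with hc
    have hc0 : 0 ≤ c := by positivity
    have hpdf : gaussianPDFReal 0 1 t = c * Real.exp (-t^2/2) := by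
      unfold gaussianPDFReal
      rw [hc]
      push_cast
      rw [mul_one, mul_one, sub_zero]
    have habs : |t * Real.exp (-(1/2) * t^2)| = |t| * Real.exp (-t^2/2) := by
      rw [abs_mul, abs_of_pos (Real.exp_pos _)]
      congr 2
      ring
    rw [habs, hpdf]
    have hGle : max (|t|/y - 1) 0 / 2 ≤ |t| / (2*y) := by
      rcases max_cases (|t|/y - 1) 0 with ⟨h, h2⟩ | ⟨h, h2⟩ <;> rw [h]
      · have h3 : 0 ≤ |t|/y := by positivity
        calc (|t|/y - 1)/2 ≤ (|t|/y)/2 := by linarith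
          _ = |t|/(2*y) := by ring
      · rw [zero_div]; positivity
    rw [Real.norm_eq_abs, abs_of_nonneg (by positivity)]
    calc c * Real.exp (-t^2/2) * (max (|t|/y - 1) 0 / 2)
        ≤ c * Real.exp (-t^2/2) * (|t|/(2*y)) := by
          apply mul_le_mul_of_nonneg_left hGle (by positivity)
      _ = c/(2*y) * (|t| * Real.exp (-t^2/2)) := by ring

lemma lintegral_G (y : ℝ) (hy : 0 < y) :
    ∫⁻ z, ENNReal.ofReal (max (|z|/y - 1) 0 / 2) ∂(gaussianReal 0 1)
      = ENNReal.ofReal (phi y) := by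
  have hGmeas : Measurable fun z : ℝ => ENNReal.ofReal (max (|z|/y - 1) 0 / 2) :=
    ENNReal.measurable_ofReal.comp
      ((((measurable_id.abs.div_const y).sub_const 1).max measurable_const).div_const 2)
  rw [gaussianReal_of_var_ne_zero 0 one_ne_zero,
    lintegral_withDensity_eq_lintegral_mul _ (measurable_gaussianPDF 0 1) hGmeas]
  simp_rw [Pi.mul_apply, gaussianPDF,
    ← ENNReal.ofReal_mul (gaussianPDFReal_nonneg 0 1 _)]
  rw [← ofReal_integral_eq_lintegral_ofReal (integrable_pdfG y hy)
    (Filter.Eventually.of_forall (fun z => mul_nonneg (gaussianPDFReal_nonneg 0 1 z) (by positivity)))]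
  congr 1
  exact integral_H y hy


lemma measurable_dotp {d : ℕ} (w : Fin d → ℝ) : Measurable (fun a : Fin d → ℝ => dotp a w) := by
  unfold dotp
  exact Finset.measurable_sum _ (fun i _ => (measurable_pi_apply i).mul_const _)

lemma lintegral_gaussPi (d : ℕ) (w : Fin d → ℝ) (hw : 0 < enorm' w) (δ : ℝ) (hδ : 0 < δ) :
    ∫⁻ a, ENNReal.ofReal (max (|dotp a w|/δ - 1) 0 / 2) ∂(gaussPi d)
      = ENNReal.ofReal (phi (δ / enorm' w)) := by
  set x : ℝ := enorm' w with hx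
  have hx2 : x^2 = ∑ i, w i ^ 2 := by
    rw [hx]; unfold enorm'
    rw [Real.sq_sqrt]
    positivity
  set y : ℝ := δ / x with hy
  have hy0 : 0 < y := div_pos hδ hw
  have hF : Measurable fun t : ℝ => ENNReal.ofReal (max (|t|/δ - 1) 0 / 2) :=
    ENNReal.measurable_ofReal.comp
      ((((measurable_id.abs.div_const δ).sub_const 1).max measurable_const).div_const 2)
  have hdotc : ∀ a : Fin d → ℝ, dotp a w = ∑ i, w i * a i := by
    intro a; unfold dotp; exact Finset.sum_congr rfl (fun i _ => mul_comm _ _)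
  have hmeas_sum : Measurable (fun a : Fin d → ℝ => ∑ i, w i * a i) :=
    Finset.measurable_sum _ (fun i _ => (measurable_pi_apply i).const_mul _)
  have h1 : ∫⁻ a, ENNReal.ofReal (max (|dotp a w|/δ - 1) 0 / 2) ∂(gaussPi d)
      = ∫⁻ t, ENNReal.ofReal (max (|t|/δ - 1) 0 / 2) ∂(gaussianReal 0 (∑ i, w i ^ 2).toNNReal) := by
    simp_rw [hdotc]
    rw [← dotp_law d w, lintegral_map hF hmeas_sum]
  rw [h1]
  -- scaling: gaussianReal 0 V = map (x * ·) (gaussianReal 0 1)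
  have hV : NNReal.mk (x^2) (sq_nonneg x) * 1 = (∑ i, w i ^ 2).toNNReal := by
    have hnn : (0:ℝ) ≤ ∑ i, w i ^ 2 := by positivity
    ext
    simp [Real.coe_toNNReal _ hnn, hx2]
  have hmap : Measure.map (fun z : ℝ => x * z) (gaussianReal 0 1)
      = gaussianReal 0 (∑ i, w i ^ 2).toNNReal := by
    rw [show (fun z : ℝ => x * z) = (fun z : ℝ => x * z) from rfl]
    rw [gaussianReal_map_const_mul x, mul_zero, hV]
  rw [← hmap, lintegral_map hF (measurable_const_mul x)]
  have hpt : ∀ z : ℝ, ENNReal.ofReal (max (|x * z|/δ - 1) 0 / 2)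
      = ENNReal.ofReal (max (|z|/y - 1) 0 / 2) := by
    intro z
    congr 3
    rw [abs_mul, abs_of_pos hw, hy]
    rw [div_div_eq_mul_div]
    ring
  simp_rw [hpt]
  exact lintegral_G y hy0


lemma measurable_hashIdx {d : ℕ} (δ : ℝ) (p : Fin d → ℝ) :
    Measurable (fun ab : (Fin d → ℝ) × ℝ => hashIdx δ ab.1 ab.2 p) := by
  unfold hashIdx
  apply Measurable.comp (f := fun ab : (Fin d → ℝ) × ℝ => ⌊(dotp ab.1 p + ab.2) / δ⌋)
    (g := fun z : ℤ => z % 4)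
  · exact measurable_from_top
  · exact Int.measurable_floor.comp
      ((((measurable_dotp p).comp measurable_fst).add measurable_snd).div_const δ)

lemma measurable_mismatch_set {d : ℕ} (δ : ℝ) (s q : Fin d → ℝ) :
    MeasurableSet {ab : (Fin d → ℝ) × ℝ | Mismatch δ ab.1 ab.2 s q} := by
  have h : {ab : (Fin d → ℝ) × ℝ | Mismatch δ ab.1 ab.2 s q}
      = ((fun ab : (Fin d → ℝ) × ℝ => hashIdx δ ab.1 ab.2 s) ⁻¹' {0} ∩
          (fun ab => hashIdx δ ab.1 ab.2 q) ⁻¹' {2}) ∪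
        ((fun ab => hashIdx δ ab.1 ab.2 s) ⁻¹' {2} ∩
          (fun ab => hashIdx δ ab.1 ab.2 q) ⁻¹' {0}) := by
    ext ab
    simp [Mismatch, Set.mem_setOf_eq]
  rw [h]
  exact (((measurable_hashIdx δ s) (measurableSet_singleton _)).inter
      ((measurable_hashIdx δ q) (measurableSet_singleton _))).union
    (((measurable_hashIdx δ s) (measurableSet_singleton _)).inter
      ((measurable_hashIdx δ q) (measurableSet_singleton _)))

instance (δ : ℝ) : SFinite (unifB δ) := by
  unfold unifB
  infer_instance



/-- `Ψ̄(s,q) ≤ φ(δ/x)` where `x = ‖s - q‖ > 0`. -/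
theorem psiBar_le_phi (d : ℕ) (hd : 1 ≤ d) (δ : ℝ) (hδ : 0 < δ) (s q : Fin d → ℝ)
    (hx : 0 < enorm' (s - q)) :
    PsiBar d δ s q ≤ ENNReal.ofReal (phi (δ / enorm' (s - q))) := by
  unfold PsiBar jointμ
  rw [Measure.prod_apply (measurable_mismatch_set δ s q)]
  have hsec : ∀ a : Fin d → ℝ,
      (Prod.mk a ⁻¹' {ab : (Fin d → ℝ) × ℝ | Mismatch δ ab.1 ab.2 s q})
        = {b : ℝ | Mismatch1 δ b (dotp a s) (dotp a q)} := fun a => rfl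
  simp_rw [hsec]
  calc ∫⁻ a, unifB δ {b : ℝ | Mismatch1 δ b (dotp a s) (dotp a q)} ∂(gaussPi d)
      ≤ ∫⁻ a, ENNReal.ofReal (max (|dotp a s - dotp a q|/δ - 1) 0 / 2) ∂(gaussPi d) := by
        apply lintegral_mono
        intro a
        exact psiBar_bound δ (dotp a s) (dotp a q) hδ
    _ = ∫⁻ a, ENNReal.ofReal (max (|dotp a (s - q)|/δ - 1) 0 / 2) ∂(gaussPi d) := by
        have hdsub : ∀ a : Fin d → ℝ, dotp a s - dotp a q = dotp a (s - q) := by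
          intro a
          unfold dotp
          rw [← Finset.sum_sub_distrib]
          refine Finset.sum_congr rfl (fun i _ => ?_)
          rw [Pi.sub_apply, mul_sub]
        simp_rw [hdsub]
    _ = ENNReal.ofReal (phi (δ / enorm' (s - q))) :=
        lintegral_gaussPi d (s - q) hx δ hδ


end
end

section
/- For every y ≥ 2, φ(y) − φ(2y) ≥ (1/(5√(2π))) · e^{−y²/2}/y³. -/
open MeasureTheory ProbabilityTheory Real
open scoped ENNReal

noncomputable section

lemma aux_expDeriv (t : ℝ) :
    HasDerivAt (fun t : ℝ => Real.exp (-t^2/2)) (-t * Real.exp (-t^2/2)) t := by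
  have : HasDerivAt (fun t : ℝ => -t^2/2) (-t) t := by
    have h := ((hasDerivAt_pow 2 t).neg.div_const 2)
    simpa [pow_one] using h.congr_deriv (by ring)
  simpa [mul_comm] using this.exp

lemma aux_ftc1 (y : ℝ) (hy : 0 < y) :
    ∫ t in y..(2*y), Real.exp (-t^2/2) * (1 + 1/t^2)
      = Real.exp (-y^2/2)/y - Real.exp (-(2*y)^2/2)/(2*y) := by
  have h2y : y ≤ 2*y := by linarith
  have key : ∀ t ∈ Set.uIcc y (2*y),
      HasDerivAt (fun t => -(Real.exp (-t^2/2)/t)) (Real.exp (-t^2/2) * (1 + 1/t^2)) t := by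
    intro t ht
    rw [Set.uIcc_of_le h2y] at ht
    have h0 : 0 < t := lt_of_lt_of_le hy ht.1
    have ht0 : t ≠ 0 := ne_of_gt h0
    have := ((aux_expDeriv t).div (hasDerivAt_id t) ht0).neg
    refine this.congr_deriv ?_
    simp only [id]
    field_simp
    ring
  rw [intervalIntegral.integral_eq_sub_of_hasDerivAt key]
  · ring
  · apply ContinuousOn.intervalIntegrable
    apply ContinuousOn.mul (by fun_prop)
    apply ContinuousOn.add continuousOn_const
    apply ContinuousOn.div continuousOn_const (by fun_prop)
    intro t ht
    rw [Set.uIcc_of_le h2y] at ht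
    have h0 : 0 < t := lt_of_lt_of_le hy ht.1
    positivity

lemma aux_ftc3 (y : ℝ) (hy : 0 < y) :
    ∫ t in y..(2*y), Real.exp (-t^2/2) * (1/t^2 + 3/t^4)
      = Real.exp (-y^2/2)/y^3 - Real.exp (-(2*y)^2/2)/(2*y)^3 := by
  have h2y : y ≤ 2*y := by linarith
  have key : ∀ t ∈ Set.uIcc y (2*y),
      HasDerivAt (fun t => -(Real.exp (-t^2/2)/t^3)) (Real.exp (-t^2/2) * (1/t^2 + 3/t^4)) t := by
    intro t ht
    rw [Set.uIcc_of_le h2y] at ht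
    have h0 : 0 < t := lt_of_lt_of_le hy ht.1
    have ht0 : (t:ℝ)^3 ≠ 0 := by positivity
    have := ((aux_expDeriv t).div (hasDerivAt_pow 3 t) ht0).neg
    refine this.congr_deriv ?_
    field_simp
    ring
  rw [intervalIntegral.integral_eq_sub_of_hasDerivAt key]
  · ring
  · apply ContinuousOn.intervalIntegrable
    apply ContinuousOn.mul (by fun_prop)
    apply ContinuousOn.add
    · apply ContinuousOn.div continuousOn_const (by fun_prop)
      intro t ht
      rw [Set.uIcc_of_le h2y] at ht
      have h0 : 0 < t := lt_of_lt_of_le hy ht.1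
      positivity
    · apply ContinuousOn.div continuousOn_const (by fun_prop)
      intro t ht
      rw [Set.uIcc_of_le h2y] at ht
      have h0 : 0 < t := lt_of_lt_of_le hy ht.1
      positivity

lemma aux_gauss_integrable :
    Integrable (fun t : ℝ => (1 / Real.sqrt (2 * π)) * Real.exp (-t ^ 2 / 2)) := by
  have h := (integrable_exp_neg_mul_sq (by norm_num : (0:ℝ) < 1/2)).const_mul
    (1 / Real.sqrt (2 * π))
  have he : ∀ x : ℝ, -x^2/2 = -(1/2 * x^2) := fun x => by ring
  simpa [he] using h

lemma aux_Fbar_split (y : ℝ) (hy : 0 < y) :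
    Fbar y - Fbar (2*y) = ∫ t in y..(2*y), (1 / Real.sqrt (2 * π)) * Real.exp (-t ^ 2 / 2) := by
  have h2y : y ≤ 2*y := by linarith
  have hunion : Set.Ioc y (2*y) ∪ Set.Ioi (2*y) = Set.Ioi y := Set.Ioc_union_Ioi_eq_Ioi h2y
  have := setIntegral_union (Set.Ioc_disjoint_Ioi le_rfl) measurableSet_Ioi
    (aux_gauss_integrable.integrableOn (s := Set.Ioc y (2*y)))
    (aux_gauss_integrable.integrableOn (s := Set.Ioi (2*y)))
    (μ := volume) (f := fun t : ℝ => (1 / Real.sqrt (2 * π)) * Real.exp (-t ^ 2 / 2))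
  rw [hunion] at this
  rw [intervalIntegral.integral_of_le h2y]
  unfold Fbar
  rw [this]
  ring


/-- for `y ≥ 2`, `φ(y) - φ(2y) ≥ (1/(5√(2π))) e^{-y²/2}/y³`. -/
theorem phi_sub_phi_lower_bound (y : ℝ) (hy : 2 ≤ y) :
    1 / (5 * Real.sqrt (2 * π)) * (Real.exp (-y ^ 2 / 2) / y ^ 3) ≤ phi y - phi (2 * y) := by
  have hy0 : (0:ℝ) < y := by linarith
  have h2y : y ≤ 2*y := by linarith
  have hs : (0:ℝ) < Real.sqrt (2 * π) := Real.sqrt_pos.2 (by positivity)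
  set s := Real.sqrt (2 * π) with hsdef
  -- interval integrabilities
  have hInt_e : IntervalIntegrable (fun t : ℝ => Real.exp (-t^2/2)) volume y (2*y) :=
    (Continuous.intervalIntegrable (by fun_prop) _ _)
  have hcontq : ContinuousOn (fun t : ℝ => Real.exp (-t^2/2) / t^2) (Set.uIcc y (2*y)) := by
    apply ContinuousOn.div (by fun_prop) (by fun_prop)
    intro t ht
    rw [Set.uIcc_of_le h2y] at ht
    have h0 : 0 < t := lt_of_lt_of_le hy0 ht.1
    positivity
  have hInt_q : IntervalIntegrable (fun t : ℝ => Real.exp (-t^2/2) / t^2) volume y (2*y) :=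
    hcontq.intervalIntegrable
  have hcont3 : ContinuousOn (fun t : ℝ => Real.exp (-t^2/2) * (1/t^2 + 3/t^4))
      (Set.uIcc y (2*y)) := by
    apply ContinuousOn.mul (by fun_prop)
    apply ContinuousOn.add
    · apply ContinuousOn.div continuousOn_const (by fun_prop)
      intro t ht
      rw [Set.uIcc_of_le h2y] at ht
      have h0 : 0 < t := lt_of_lt_of_le hy0 ht.1
      positivity
    · apply ContinuousOn.div continuousOn_const (by fun_prop)
      intro t ht
      rw [Set.uIcc_of_le h2y] at ht
      have h0 : 0 < t := lt_of_lt_of_le hy0 ht.1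
      positivity
  have hInt_3 : IntervalIntegrable (fun t : ℝ => Real.exp (-t^2/2) * (1/t^2 + 3/t^4))
      volume y (2*y) := hcont3.intervalIntegrable
  -- key identity: phi y - phi (2y) = (1/s) * ∫ exp(-t²/2)/t²
  have hadd : ∫ t in y..(2*y), Real.exp (-t^2/2) * (1 + 1/t^2)
      = (∫ t in y..(2*y), Real.exp (-t^2/2)) + ∫ t in y..(2*y), Real.exp (-t^2/2) / t^2 := by
    rw [← intervalIntegral.integral_add hInt_e hInt_q]
    apply intervalIntegral.integral_congr
    intro t _
    ring
  have hFsplit := aux_Fbar_split y hy0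
  have hFconst : (∫ t in y..(2*y), (1 / s) * Real.exp (-t ^ 2 / 2))
      = (1/s) * ∫ t in y..(2*y), Real.exp (-t ^ 2 / 2) := by
    rw [intervalIntegral.integral_const_mul]
  have hkey : phi y - phi (2*y) = (1/s) * ∫ t in y..(2*y), Real.exp (-t^2/2) / t^2 := by
    have h1 := aux_ftc1 y hy0
    have hne : (y : ℝ) ≠ 0 := ne_of_gt hy0
    have h2ne : (2*y : ℝ) ≠ 0 := by positivity
    have hA : Real.exp (-y ^ 2 / 2) / (y * s) - Real.exp (-(2*y) ^ 2 / 2) / ((2*y) * s)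
        = (1/s) * (Real.exp (-y^2/2)/y - Real.exp (-(2*y)^2/2)/(2*y)) := by
      field_simp
    unfold phi
    rw [sub_sub_sub_comm, hA, hFsplit, hFconst, ← h1, hadd]
    ring
  rw [hkey]
  -- lower bound the integral
  have hmono : (4/7 : ℝ) * (Real.exp (-y^2/2)/y^3 - Real.exp (-(2*y)^2/2)/(2*y)^3)
      ≤ ∫ t in y..(2*y), Real.exp (-t^2/2) / t^2 := by
    rw [← aux_ftc3 y hy0, ← intervalIntegral.integral_const_mul]
    apply intervalIntegral.integral_mono_on h2y (hInt_3.const_mul _) hInt_q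
    intro t ht
    have ht2 : (2:ℝ) ≤ t := le_trans hy ht.1
    have ht0 : (0:ℝ) < t := by linarith
    have hE : (0:ℝ) < Real.exp (-t^2/2) := Real.exp_pos _
    have hu0 : (0:ℝ) < 1/t^2 := by positivity
    have hu : (1:ℝ)/t^2 ≤ 1/4 := by
      apply one_div_le_one_div_of_le (by norm_num)
      nlinarith
    have h4 : (3:ℝ)/t^4 = 3 * (1/t^2)^2 := by ring
    have hfrac : (4/7 : ℝ) * (1/t^2 + 3/t^4) ≤ 1/t^2 := by
      rw [h4]
      nlinarith
    calc (4/7 : ℝ) * (Real.exp (-t^2/2) * (1/t^2 + 3/t^4))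
        = Real.exp (-t^2/2) * ((4/7:ℝ) * (1/t^2 + 3/t^4)) := by ring
      _ ≤ Real.exp (-t^2/2) * (1/t^2) := by
          exact mul_le_mul_of_nonneg_left hfrac (le_of_lt hE)
      _ = Real.exp (-t^2/2) / t^2 := by ring
  have hI3 : (7/8 : ℝ) * (Real.exp (-y^2/2)/y^3)
      ≤ Real.exp (-y^2/2)/y^3 - Real.exp (-(2*y)^2/2)/(2*y)^3 := by
    have hee : Real.exp (-(2*y)^2/2) ≤ Real.exp (-y^2/2) := by
      apply Real.exp_le_exp.2
      nlinarith
    have hcube : ((2*y)^3 : ℝ) = 8 * y^3 := by ring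
    have hy3 : (0:ℝ) < y^3 := by positivity
    rw [hcube]
    have h8 : Real.exp (-(2*y)^2/2)/(8*y^3) ≤ Real.exp (-y^2/2)/(8*y^3) := by gcongr
    have heq : Real.exp (-y^2/2)/y^3 - Real.exp (-y^2/2)/(8*y^3)
        = 7/8 * (Real.exp (-y^2/2)/y^3) := by ring
    linarith
  have hE0 : (0:ℝ) ≤ Real.exp (-y^2/2)/y^3 := by positivity
  have hfinal : (1/5 : ℝ) * (Real.exp (-y^2/2)/y^3)
      ≤ ∫ t in y..(2*y), Real.exp (-t^2/2) / t^2 := by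
    nlinarith
  calc 1 / (5 * s) * (Real.exp (-y ^ 2 / 2) / y ^ 3)
      = (1/s) * ((1/5 : ℝ) * (Real.exp (-y^2/2)/y^3)) := by
        field_simp
      _ ≤ (1/s) * ∫ t in y..(2*y), Real.exp (-t^2/2) / t^2 := by
        apply mul_le_mul_of_nonneg_left hfinal (by positivity)


end
end

section
/- For every y ≥ 2, φ(y) − φ(2y) ≥ (1/4 − (1/8) e^{−3y²/2}) · (1/(y³√(2π))) · e^{−y²/2}. -/
open MeasureTheory ProbabilityTheory Real
open scoped ENNReal

noncomputable section

private lemma exp_deriv_aux (t : ℝ) :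
    HasDerivAt (fun t : ℝ => Real.exp (-t ^ 2 / 2)) (-t * Real.exp (-t ^ 2 / 2)) t := by
  have h : HasDerivAt (fun t : ℝ => -t ^ 2 / 2) (-t) t := by
    have := ((hasDerivAt_pow 2 t).neg).div_const 2
    simpa using this.congr_deriv (by ring)
  simpa [mul_comm] using h.exp

private lemma exp_tendsto_aux : Filter.Tendsto (fun t : ℝ => Real.exp (-t ^ 2 / 2))
    Filter.atTop (nhds 0) := by
  apply Real.tendsto_exp_atBot.comp
  have h : Filter.Tendsto (fun t : ℝ => t ^ 2 / 2) Filter.atTop Filter.atTop :=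
    (Filter.tendsto_pow_atTop (by norm_num)).atTop_div_const (by norm_num)
  have h2 := Filter.tendsto_neg_atTop_atBot.comp h
  exact h2.congr fun t => by simp [Function.comp, neg_div]

private lemma intOn_exp_aux (y : ℝ) :
    MeasureTheory.IntegrableOn (fun t : ℝ => Real.exp (-t ^ 2 / 2)) (Set.Ioi y) := by
  have h := integrable_exp_neg_mul_sq (by norm_num : (0:ℝ) < 1/2)
  have he : (fun t : ℝ => Real.exp (-t ^ 2 / 2)) = fun t : ℝ => Real.exp (-(1/2) * t ^ 2) := by
    funext t; ring_nf
  rw [he]; exact h.integrableOn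

private lemma intOn_mul_aux (y : ℝ) (hy : 2 ≤ y) (f : ℝ → ℝ)
    (hf : ContinuousOn f (Set.Ioi y)) (hbd : ∀ t ∈ Set.Ioi y, |f t| ≤ 2) :
    MeasureTheory.IntegrableOn (fun t : ℝ => f t * Real.exp (-t ^ 2 / 2)) (Set.Ioi y) := by
  have hg : MeasureTheory.IntegrableOn (fun t : ℝ => 2 * Real.exp (-t ^ 2 / 2)) (Set.Ioi y) :=
    (intOn_exp_aux y).const_mul 2
  refine hg.mono' ?_ ?_
  · exact (hf.mul (Real.continuous_exp.comp (by continuity)).continuousOn).aestronglyMeasurable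
      measurableSet_Ioi
  · filter_upwards [MeasureTheory.ae_restrict_mem measurableSet_Ioi] with t ht
    have h1 := hbd t ht
    have h2 : (0:ℝ) < Real.exp (-t ^ 2 / 2) := Real.exp_pos _
    rw [Real.norm_eq_abs, abs_mul, abs_of_pos h2]
    exact mul_le_mul_of_nonneg_right h1 h2.le

private lemma tpow_pos {t : ℝ} (ht : 0 < t) (n : ℕ) : (0:ℝ) < t ^ n := pow_pos ht n

/-- FTC identity 1. -/
private lemma eq1_aux (y : ℝ) (hy : 2 ≤ y) :
    ∫ t in Set.Ioi y, (1 - 3 / t ^ 4) * Real.exp (-t ^ 2 / 2)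
      = (1 / y - 1 / y ^ 3) * Real.exp (-y ^ 2 / 2) := by
  have h0 : (0:ℝ) < y := by linarith
  have hderiv : ∀ t ∈ Set.Ici y, HasDerivAt
      (fun t : ℝ => -(t⁻¹ - (t ^ 3)⁻¹) * Real.exp (-t ^ 2 / 2))
      ((1 - 3 / t ^ 4) * Real.exp (-t ^ 2 / 2)) t := by
    intro t ht
    have ht0 : t ≠ 0 := by have : (0:ℝ) < t := lt_of_lt_of_le h0 ht; linarith
    have h1 : HasDerivAt (fun t : ℝ => -(t⁻¹ - (t ^ 3)⁻¹))
        (-(-(t ^ 2)⁻¹ - -(3 * t ^ 2) / (t ^ 3) ^ 2)) t := by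
      have ha := (hasDerivAt_inv ht0).sub
        ((hasDerivAt_pow 3 t).inv (pow_ne_zero 3 ht0))
      exact ha.neg.congr_deriv (by norm_num <;> ring)
    have := h1.mul (exp_deriv_aux t)
    apply this.congr_deriv
    have hexp := Real.exp_ne_zero (-t ^ 2 / 2)
    field_simp
    ring
  have htend : Filter.Tendsto (fun t : ℝ => -(t⁻¹ - (t ^ 3)⁻¹) * Real.exp (-t ^ 2 / 2))
      Filter.atTop (nhds 0) := by
    have hb : Filter.Tendsto (fun t : ℝ => (t ^ 3)⁻¹) Filter.atTop (nhds (0:ℝ)) :=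
      tendsto_inv_atTop_zero.comp (Filter.tendsto_pow_atTop (by norm_num))
    have h1 : Filter.Tendsto (fun t : ℝ => -(t⁻¹ - (t ^ 3)⁻¹)) Filter.atTop (nhds 0) := by
      have := (tendsto_inv_atTop_zero.sub hb).neg
      simpa using this
    simpa using h1.mul exp_tendsto_aux
  have hint : MeasureTheory.IntegrableOn
      (fun t : ℝ => (1 - 3 / t ^ 4) * Real.exp (-t ^ 2 / 2)) (Set.Ioi y) := by
    refine intOn_mul_aux y hy _ ?_ ?_
    · apply ContinuousOn.sub continuousOn_const
      exact continuousOn_const.div (continuousOn_pow 4) fun t ht =>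
        ne_of_gt (tpow_pos (lt_of_lt_of_le h0 (le_of_lt ht)) 4)
    · intro t ht
      have ht2 : (2:ℝ) ≤ t := le_trans hy (le_of_lt ht)
      have ht22 : (4:ℝ) ≤ t ^ 2 := by nlinarith
      have h4 : (16:ℝ) ≤ t ^ 4 := by nlinarith [sq_nonneg (t ^ 2 - 4)]
      have h40 : (0:ℝ) < t ^ 4 := by linarith
      rw [abs_le]
      constructor
      · have : 3 / t ^ 4 ≤ 3 / 16 := by
          apply div_le_div_of_nonneg_left (by norm_num) (by norm_num) h4
        · linarith
      · have : (0:ℝ) ≤ 3 / t ^ 4 := by positivity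
        linarith
  have := MeasureTheory.integral_Ioi_of_hasDerivAt_of_tendsto' hderiv hint htend
  rw [this]
  have hy0 : y ≠ 0 := ne_of_gt h0
  field_simp
  ring

/-- FTC identity 2. -/
private lemma eq2_aux (y : ℝ) (hy : 2 ≤ y) :
    ∫ t in Set.Ioi y, (1 + 15 / t ^ 6) * Real.exp (-t ^ 2 / 2)
      = (1 / y - 1 / y ^ 3 + 3 / y ^ 5) * Real.exp (-y ^ 2 / 2) := by
  have h0 : (0:ℝ) < y := by linarith
  have hderiv : ∀ t ∈ Set.Ici y, HasDerivAt
      (fun t : ℝ => -(t⁻¹ - (t ^ 3)⁻¹ + 3 * (t ^ 5)⁻¹) * Real.exp (-t ^ 2 / 2))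
      ((1 + 15 / t ^ 6) * Real.exp (-t ^ 2 / 2)) t := by
    intro t ht
    have ht0 : t ≠ 0 := by have : (0:ℝ) < t := lt_of_lt_of_le h0 ht; linarith
    have h1 : HasDerivAt (fun t : ℝ => -(t⁻¹ - (t ^ 3)⁻¹ + 3 * (t ^ 5)⁻¹))
        (-(-(t ^ 2)⁻¹ - -(3 * t ^ 2) / (t ^ 3) ^ 2 + 3 * (-(5 * t ^ 4) / (t ^ 5) ^ 2))) t := by
      have ha := ((hasDerivAt_inv ht0).sub
        ((hasDerivAt_pow 3 t).inv (pow_ne_zero 3 ht0))).add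
        (((hasDerivAt_pow 5 t).inv (pow_ne_zero 5 ht0)).const_mul 3)
      exact ha.neg.congr_deriv (by norm_num <;> ring)
    have := h1.mul (exp_deriv_aux t)
    apply this.congr_deriv
    have hexp := Real.exp_ne_zero (-t ^ 2 / 2)
    field_simp
    ring
  have htend : Filter.Tendsto
      (fun t : ℝ => -(t⁻¹ - (t ^ 3)⁻¹ + 3 * (t ^ 5)⁻¹) * Real.exp (-t ^ 2 / 2))
      Filter.atTop (nhds 0) := by
    have hb : Filter.Tendsto (fun t : ℝ => (t ^ 3)⁻¹) Filter.atTop (nhds (0:ℝ)) :=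
      tendsto_inv_atTop_zero.comp (Filter.tendsto_pow_atTop (by norm_num))
    have hc : Filter.Tendsto (fun t : ℝ => (t ^ 5)⁻¹) Filter.atTop (nhds (0:ℝ)) :=
      tendsto_inv_atTop_zero.comp (Filter.tendsto_pow_atTop (by norm_num))
    have h1 : Filter.Tendsto (fun t : ℝ => -(t⁻¹ - (t ^ 3)⁻¹ + 3 * (t ^ 5)⁻¹))
        Filter.atTop (nhds 0) := by
      have := ((tendsto_inv_atTop_zero.sub hb).add (hc.const_mul 3)).neg
      simpa using this
    simpa using h1.mul exp_tendsto_aux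
  have hint : MeasureTheory.IntegrableOn
      (fun t : ℝ => (1 + 15 / t ^ 6) * Real.exp (-t ^ 2 / 2)) (Set.Ioi y) := by
    refine intOn_mul_aux y hy _ ?_ ?_
    · apply ContinuousOn.add continuousOn_const
      exact continuousOn_const.div (continuousOn_pow 6) fun t ht =>
        ne_of_gt (tpow_pos (lt_of_lt_of_le h0 (le_of_lt ht)) 6)
    · intro t ht
      have ht2 : (2:ℝ) ≤ t := le_trans hy (le_of_lt ht)
      have ht22 : (4:ℝ) ≤ t ^ 2 := by nlinarith
      have h4 : (16:ℝ) ≤ t ^ 4 := by nlinarith [sq_nonneg (t ^ 2 - 4)]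
      have h6 : (64:ℝ) ≤ t ^ 6 := by nlinarith [mul_le_mul ht22 h4 (by norm_num) (by positivity : (0:ℝ) ≤ t ^ 2)]
      have h60 : (0:ℝ) < t ^ 6 := by linarith
      have h15 : 15 / t ^ 6 ≤ 15 / 64 := by
        apply div_le_div_of_nonneg_left (by norm_num) (by norm_num) h6
      have hnn : (0:ℝ) ≤ 15 / t ^ 6 := by positivity
      rw [abs_le]; constructor <;> linarith
  have := MeasureTheory.integral_Ioi_of_hasDerivAt_of_tendsto' hderiv hint htend
  rw [this]
  have hy0 : y ≠ 0 := ne_of_gt h0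
  field_simp
  ring

private lemma core_lower (y : ℝ) (hy : 2 ≤ y) :
    (1 / y - 1 / y ^ 3) * Real.exp (-y ^ 2 / 2)
      ≤ ∫ t in Set.Ioi y, Real.exp (-t ^ 2 / 2) := by
  rw [← eq1_aux y hy]
  apply MeasureTheory.setIntegral_mono_on
  · exact (intOn_mul_aux y hy _ (by
      apply ContinuousOn.sub continuousOn_const
      exact continuousOn_const.div (continuousOn_pow 4) fun t ht =>
        ne_of_gt (tpow_pos (lt_of_lt_of_le (by linarith) (le_of_lt ht)) 4)) (by
      intro t ht
      have ht2 : (2:ℝ) ≤ t := le_trans hy (le_of_lt ht)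
      have ht22 : (4:ℝ) ≤ t ^ 2 := by nlinarith
      have h4 : (16:ℝ) ≤ t ^ 4 := by nlinarith [sq_nonneg (t ^ 2 - 4)]
      have : 3 / t ^ 4 ≤ 3 / 16 :=
        div_le_div_of_nonneg_left (by norm_num) (by norm_num) h4
      have hnn : (0:ℝ) ≤ 3 / t ^ 4 := by positivity
      rw [abs_le]; constructor <;> linarith))
  · exact intOn_exp_aux y
  · exact measurableSet_Ioi
  · intro t ht
    have ht0 : (0:ℝ) < t := lt_of_lt_of_le (by linarith) (le_of_lt ht)
    have hnn : (0:ℝ) ≤ 3 / t ^ 4 := by positivity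
    have hE : (0:ℝ) < Real.exp (-t ^ 2 / 2) := Real.exp_pos _
    nlinarith

private lemma core_upper (y : ℝ) (hy : 2 ≤ y) :
    (∫ t in Set.Ioi y, Real.exp (-t ^ 2 / 2))
      ≤ (1 / y - 1 / y ^ 3 + 3 / y ^ 5) * Real.exp (-y ^ 2 / 2) := by
  rw [← eq2_aux y hy]
  apply MeasureTheory.setIntegral_mono_on
  · exact intOn_exp_aux y
  · exact intOn_mul_aux y hy _ (by
      apply ContinuousOn.add continuousOn_const
      exact continuousOn_const.div (continuousOn_pow 6) fun t ht =>
        ne_of_gt (tpow_pos (lt_of_lt_of_le (by linarith) (le_of_lt ht)) 6)) (by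
      intro t ht
      have ht2 : (2:ℝ) ≤ t := le_trans hy (le_of_lt ht)
      have ht22 : (4:ℝ) ≤ t ^ 2 := by nlinarith
      have h4 : (16:ℝ) ≤ t ^ 4 := by nlinarith [sq_nonneg (t ^ 2 - 4)]
      have h6 : (64:ℝ) ≤ t ^ 6 := by nlinarith [mul_le_mul ht22 h4 (by norm_num) (by positivity : (0:ℝ) ≤ t ^ 2)]
      have : 15 / t ^ 6 ≤ 15 / 64 :=
        div_le_div_of_nonneg_left (by norm_num) (by norm_num) h6
      have hnn : (0:ℝ) ≤ 15 / t ^ 6 := by positivity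
      rw [abs_le]; constructor <;> linarith)
  · exact measurableSet_Ioi
  · intro t ht
    have ht0 : (0:ℝ) < t := lt_of_lt_of_le (by linarith) (le_of_lt ht)
    have hnn : (0:ℝ) ≤ 15 / t ^ 6 := by positivity
    have hE : (0:ℝ) < Real.exp (-t ^ 2 / 2) := Real.exp_pos _
    nlinarith

private lemma Fbar_eq (y : ℝ) :
    Fbar y = (1 / Real.sqrt (2 * π)) * ∫ t in Set.Ioi y, Real.exp (-t ^ 2 / 2) := by
  rw [Fbar, ← MeasureTheory.integral_const_mul]

/-- for `y ≥ 2`,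
`φ(y) - φ(2y) ≥ (1/4 - (1/8) e^{-3y²/2}) (1/(y³√(2π))) e^{-y²/2}`. -/
theorem phi_sub_phi_lower_bound' (y : ℝ) (hy : 2 ≤ y) :
    (1 / 4 - 1 / 8 * Real.exp (-(3 * y ^ 2) / 2)) * (1 / (y ^ 3 * Real.sqrt (2 * π)))
        * Real.exp (-y ^ 2 / 2) ≤ phi y - phi (2 * y) := by
  have hπ : (0:ℝ) < Real.sqrt (2 * π) := Real.sqrt_pos.2 (by positivity)
  have hy0 : (0:ℝ) < y := by linarith
  have h2y : (2:ℝ) ≤ 2 * y := by linarith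
  have hU := core_upper y hy
  have hL := core_lower (2 * y) h2y
  rw [phi, phi, Fbar_eq, Fbar_eq]
  have hE : (0:ℝ) < Real.exp (-y ^ 2 / 2) := Real.exp_pos _
  have hE3 : (0:ℝ) < Real.exp (-(3 * y ^ 2) / 2) := Real.exp_pos _
  have hE1 : Real.exp (-(2 * y) ^ 2 / 2)
      = Real.exp (-(3 * y ^ 2) / 2) * Real.exp (-y ^ 2 / 2) := by
    rw [← Real.exp_add]; congr 1; ring
  have hc : (0:ℝ) < 1 / Real.sqrt (2 * π) := by positivity
  have hU' := mul_le_mul_of_nonneg_left hU hc.le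
  have hL' := mul_le_mul_of_nonneg_left hL hc.le
  rw [hE1] at hL' ⊢
  set U : ℝ := (1 / y - 1 / y ^ 3 + 3 / y ^ 5) * Real.exp (-y ^ 2 / 2) with hUdef
  set L : ℝ := (1 / (2 * y) - 1 / (2 * y) ^ 3)
      * (Real.exp (-(3 * y ^ 2) / 2) * Real.exp (-y ^ 2 / 2)) with hLdef
  have step2 : (1 / 4 - 1 / 8 * Real.exp (-(3 * y ^ 2) / 2)) * (1 / (y ^ 3 * Real.sqrt (2 * π)))
        * Real.exp (-y ^ 2 / 2)
      ≤ (Real.exp (-y ^ 2 / 2) / (y * Real.sqrt (2 * π)) - 1 / Real.sqrt (2 * π) * U)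
        - (Real.exp (-(3 * y ^ 2) / 2) * Real.exp (-y ^ 2 / 2) / (2 * y * Real.sqrt (2 * π))
          - 1 / Real.sqrt (2 * π) * L) := by
    have hkey : (Real.exp (-y ^ 2 / 2) / (y * Real.sqrt (2 * π)) - 1 / Real.sqrt (2 * π) * U)
        - (Real.exp (-(3 * y ^ 2) / 2) * Real.exp (-y ^ 2 / 2) / (2 * y * Real.sqrt (2 * π))
          - 1 / Real.sqrt (2 * π) * L)
        - (1 / 4 - 1 / 8 * Real.exp (-(3 * y ^ 2) / 2)) * (1 / (y ^ 3 * Real.sqrt (2 * π)))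
          * Real.exp (-y ^ 2 / 2)
        = 1 / Real.sqrt (2 * π) * Real.exp (-y ^ 2 / 2) * (3 * (y ^ 2 - 4)) / (4 * y ^ 5) := by
      rw [hUdef, hLdef]
      field_simp
      ring
    have hpos : (0:ℝ) ≤ 1 / Real.sqrt (2 * π) * Real.exp (-y ^ 2 / 2) * (3 * (y ^ 2 - 4))
        / (4 * y ^ 5) := by
      have hy2 : (4:ℝ) ≤ y ^ 2 := by nlinarith
      have : (0:ℝ) ≤ y ^ 2 - 4 := by linarith
      positivity
    linarith
  refine le_trans step2 ?_
  linarith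

end
end

section
/- Let δ > 0 and let 0 < c ≤ x. Then φ(δ/x) − φ(2δ/x) ≥ φ(δ/c) − φ(2δ/c); equivalently, the function y ↦ φ(y) − φ(2y) is nonincreasing on (0, ∞). -/
open MeasureTheory ProbabilityTheory Real
open scoped ENNReal

noncomputable section

namespace PhiAntitoneAux

noncomputable def f (t : ℝ) : ℝ := (1 / Real.sqrt (2 * π)) * Real.exp (-t ^ 2 / 2)

lemma f_integrable : Integrable f := by
  have h : Integrable (fun t : ℝ => Real.exp (-(1/2 : ℝ) * t ^ 2)) :=
    integrable_exp_neg_mul_sq (by norm_num)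
  have : f = fun t => (1 / Real.sqrt (2 * π)) * Real.exp (-(1/2 : ℝ) * t ^ 2) := by
    funext t; unfold f; ring_nf
  rw [this]; exact h.const_mul _

lemma f_cont : Continuous f := by unfold f; fun_prop

lemma Fbar_sub (a b : ℝ) (hab : a ≤ b) : Fbar a - Fbar b = ∫ t in a..b, f t := by
  rw [intervalIntegral.integral_of_le hab]
  have := setIntegral_union (f := f) (μ := volume) (s := Set.Ioc a b) (t := Set.Ioi b)
    (Set.Ioc_disjoint_Ioi (le_refl b)) measurableSet_Ioi
    f_integrable.integrableOn f_integrable.integrableOn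
  rw [Set.Ioc_union_Ioi_eq_Ioi hab] at this
  unfold Fbar; rw [show (fun t => (1 / Real.sqrt (2 * π)) * Real.exp (-t ^ 2 / 2)) = f from rfl]
  rw [this]; ring

lemma Fbar_eq (z : ℝ) : Fbar z = Fbar 0 - ∫ t in (0:ℝ)..z, f t := by
  rcases le_total 0 z with h | h
  · have := Fbar_sub 0 z h; linarith
  · have h2 := Fbar_sub z 0 h
    rw [intervalIntegral.integral_symm 0 z] at h2; linarith

lemma Fbar_hasDeriv (y : ℝ) : HasDerivAt Fbar (-(f y)) y := by
  have h : HasDerivAt (fun z => ∫ t in (0:ℝ)..z, f t) (f y) y :=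
    intervalIntegral.integral_hasDerivAt_right (f_integrable.intervalIntegrable)
      (f_cont.stronglyMeasurable.stronglyMeasurableAtFilter) f_cont.continuousAt
  have h2 : HasDerivAt (fun z => Fbar 0 - ∫ t in (0:ℝ)..z, f t) (0 - f y) y :=
    (hasDerivAt_const y _).sub h
  simp only [zero_sub] at h2
  exact h2.congr_of_eventuallyEq (Filter.Eventually.of_forall fun z => Fbar_eq z)

lemma phi_hasDeriv {y : ℝ} (hy : y ≠ 0) :
    HasDerivAt phi (-Real.exp (-y ^ 2 / 2) / (y ^ 2 * Real.sqrt (2 * π))) y := by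
  have hs : Real.sqrt (2 * π) ≠ 0 := by positivity
  have hu : HasDerivAt (fun y : ℝ => Real.exp (-y ^ 2 / 2)) (Real.exp (-y ^ 2 / 2) * (-y)) y := by
    have h1 : HasDerivAt (fun y : ℝ => -y ^ 2 / 2) (-y) y := by
      have := ((hasDerivAt_pow 2 y).neg.div_const 2)
      simpa using this.congr_deriv (by ring)
    simpa [mul_comm] using h1.exp
  have hv : HasDerivAt (fun y : ℝ => y * Real.sqrt (2 * π)) (Real.sqrt (2 * π)) y := by
    simpa using (hasDerivAt_id y).mul_const (Real.sqrt (2 * π))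
  have hvy : y * Real.sqrt (2 * π) ≠ 0 := mul_ne_zero hy hs
  have hdiv := hu.div hv hvy
  have h3 := hdiv.sub (Fbar_hasDeriv y)
  have heq : (Real.exp (-y ^ 2 / 2) * -y * (y * Real.sqrt (2 * π)) -
        Real.exp (-y ^ 2 / 2) * Real.sqrt (2 * π)) / (y * Real.sqrt (2 * π)) ^ 2 - -(f y)
      = -Real.exp (-y ^ 2 / 2) / (y ^ 2 * Real.sqrt (2 * π)) := by
    unfold f; field_simp; ring
  rw [heq] at h3
  exact h3

lemma g_antitone : AntitoneOn (fun y => phi y - phi (2 * y)) (Set.Ioi (0:ℝ)) := by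
  have key : ∀ y ∈ interior (Set.Ioi (0:ℝ)),
      HasDerivAt (fun y => phi y - phi (2 * y))
        (-Real.exp (-y ^ 2 / 2) / (y ^ 2 * Real.sqrt (2 * π)) -
          2 * (-Real.exp (-(2*y) ^ 2 / 2) / ((2*y) ^ 2 * Real.sqrt (2 * π)))) y := by
    intro y hy
    rw [interior_Ioi] at hy
    have hy0 : y ≠ 0 := ne_of_gt hy
    have h1 := phi_hasDeriv hy0
    have h2 : HasDerivAt (fun y => phi (2 * y))
        ((-Real.exp (-(2*y) ^ 2 / 2) / ((2*y) ^ 2 * Real.sqrt (2 * π))) * 2) y := by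
      have hinner : HasDerivAt (fun y : ℝ => 2 * y) 2 y := by
        simpa using (hasDerivAt_id y).const_mul 2
      exact (phi_hasDeriv (by positivity : (2*y : ℝ) ≠ 0)).comp y hinner
    have := h1.sub h2
    exact this.congr_deriv (by ring)
  have nonpos : ∀ y ∈ interior (Set.Ioi (0:ℝ)),
      -Real.exp (-y ^ 2 / 2) / (y ^ 2 * Real.sqrt (2 * π)) -
          2 * (-Real.exp (-(2*y) ^ 2 / 2) / ((2*y) ^ 2 * Real.sqrt (2 * π))) ≤ 0 := by
    intro y hy
    rw [interior_Ioi] at hy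
    have hy' : (0:ℝ) < y := hy
    have hs : (0:ℝ) < Real.sqrt (2 * π) := by positivity
    have hexp : Real.exp (-(2*y) ^ 2 / 2) ≤ Real.exp (-y ^ 2 / 2) := by
      apply Real.exp_le_exp.2; nlinarith [sq_nonneg y]
    have h1 : 2 * (Real.exp (-(2*y) ^ 2 / 2) / ((2*y) ^ 2 * Real.sqrt (2 * π)))
        ≤ Real.exp (-y ^ 2 / 2) / (y ^ 2 * Real.sqrt (2 * π)) := by
      rw [mul_div_assoc', div_le_div_iff₀ (by positivity) (by positivity)]
      nlinarith [Real.exp_pos (-(2*y)^2/2), Real.exp_pos (-y^2/2), sq_nonneg y,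
        mul_pos (mul_pos (mul_pos hy hy) hs) hs]
    have e1 : -Real.exp (-y ^ 2 / 2) / (y ^ 2 * Real.sqrt (2 * π))
        = -(Real.exp (-y ^ 2 / 2) / (y ^ 2 * Real.sqrt (2 * π))) := by ring
    have e2 : 2 * (-Real.exp (-(2*y) ^ 2 / 2) / ((2*y) ^ 2 * Real.sqrt (2 * π)))
        = -(2 * (Real.exp (-(2*y) ^ 2 / 2) / ((2*y) ^ 2 * Real.sqrt (2 * π)))) := by ring
    rw [e1, e2]; linarith
  apply antitoneOn_of_hasDerivWithinAt_nonpos (convex_Ioi 0) _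
    (fun y hy => (key y hy).hasDerivWithinAt) nonpos
  intro y hy
  exact (key y (by rwa [interior_Ioi])).continuousAt.continuousWithinAt

end PhiAntitoneAux

/-- for `δ > 0` and `0 < c ≤ x`,
`φ(δ/x) - φ(2δ/x) ≥ φ(δ/c) - φ(2δ/c)`; equivalently, `y ↦ φ(y) - φ(2y)` is
nonincreasing on `(0, ∞)`. -/
theorem phi_sub_phi_antitone :
    (∀ δ c x : ℝ, 0 < δ → 0 < c → c ≤ x →
        phi (δ / c) - phi (2 * δ / c) ≤ phi (δ / x) - phi (2 * δ / x)) ∧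
    (∀ y z : ℝ, 0 < y → y ≤ z → phi z - phi (2 * z) ≤ phi y - phi (2 * y)) := by
  have part2 : ∀ y z : ℝ, 0 < y → y ≤ z → phi z - phi (2 * z) ≤ phi y - phi (2 * y) := by
    intro y z hy hyz
    exact PhiAntitoneAux.g_antitone (Set.mem_Ioi.2 hy) (Set.mem_Ioi.2 (lt_of_lt_of_le hy hyz)) hyz
  refine ⟨fun δ c x hδ hc hcx => ?_, part2⟩
  have hx : 0 < x := lt_of_lt_of_le hc hcx
  have h1 : (0:ℝ) < δ / x := by positivity
  have h2 : δ / x ≤ δ / c := div_le_div_of_nonneg_left (le_of_lt hδ) hc hcx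
  have := part2 (δ / x) (δ / c) h1 h2
  rw [show 2 * (δ / c) = 2 * δ / c by ring, show 2 * (δ / x) = 2 * δ / x by ring] at this
  exact this

end
end

section
/- Let d ≥ 1 and δ > 0. For every a ∈ ℝ^d, every b ∈ ℝ, and all points s, q ∈ ℝ^d with |⟨a, s − q⟩| ≤ δ, the points s and q do not mismatch, i.e. it is not the case that one of the indices j_{a,b}(s), j_{a,b}(q) equals 0 and the other equals 2. (Points whose projections onto a differ by at most δ always receive matching ternary hashes.) -/
open MeasureTheory ProbabilityTheory Real
open scoped ENNReal

noncomputable section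

/-- if the projections of `s` and `q` onto `a` differ by at most `δ`,
then `s` and `q` never mismatch. -/
theorem no_mismatch_of_close_projection (d : ℕ) (hd : 1 ≤ d) (δ : ℝ) (hδ : 0 < δ)
    (a : Fin d → ℝ) (b : ℝ) (s q : Fin d → ℝ) (h : |dotp a (s - q)| ≤ δ) :
    ¬ Mismatch δ a b s q := by
  have hdot : dotp a (s - q) = dotp a s - dotp a q := by
    simp [dotp, Pi.sub_apply, mul_sub, Finset.sum_sub_distrib]
  set x := (dotp a s + b) / δ with hx
  set y := (dotp a q + b) / δ with hy
  have hxy : |x - y| ≤ 1 := by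
    have : x - y = dotp a (s - q) / δ := by
      rw [hdot, hx, hy, ← sub_div]; ring
    rw [this, abs_div, abs_of_pos hδ, div_le_one hδ]
    exact h
  have h1 : ⌊x⌋ ≤ ⌊y⌋ + 1 := by
    have : x ≤ y + 1 := by
      have := abs_le.mp hxy; linarith [this.2]
    calc (⌊x⌋ : ℤ) ≤ ⌊y + 1⌋ := Int.floor_le_floor this
      _ = ⌊y⌋ + 1 := by rw [Int.floor_add_one]
  have h2 : ⌊y⌋ ≤ ⌊x⌋ + 1 := by
    have : y ≤ x + 1 := by
      have := abs_le.mp hxy; linarith [this.1]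
    calc (⌊y⌋ : ℤ) ≤ ⌊x + 1⌋ := Int.floor_le_floor this
      _ = ⌊x⌋ + 1 := by rw [Int.floor_add_one]
  intro hm
  rcases hm with ⟨hs, hq⟩ | ⟨hs, hq⟩ <;>
  · simp only [hashIdx, ← hx, ← hy] at hs hq
    omega

end
end

section
/- Let δ > 0 and let u, v ∈ ℝ with δ < |u − v| < 2δ. Then the probability over b uniform on (0, 2δ) that u and v mismatch equals (|u − v| − δ)/(2δ), i.e. ψ̄(u, v) = (|u − v| − δ)/(2δ). -/
open MeasureTheory ProbabilityTheory Real
open scoped ENNReal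

noncomputable section

lemma measurable_jb (δ u : ℝ) : Measurable fun b => jb δ b u := by
  unfold jb
  exact Measurable.comp (Measurable.of_discrete (f := fun n : ℤ => n % 4))
    (((measurable_const.add measurable_id).div_const δ).floor)

lemma measurableSet_mismatch1 (δ u v : ℝ) : MeasurableSet {b : ℝ | Mismatch1 δ b u v} := by
  have h : ∀ (w : ℝ) (k : ℤ), MeasurableSet {b : ℝ | jb δ b w = k} := fun w k =>
    (measurable_jb δ w) (measurableSet_singleton k)
  exact (((h u 0).inter (h v 2)).union ((h u 2).inter (h v 0)))

lemma jb_add (δ b w : ℝ) (hδ : δ ≠ 0) : jb δ (b + 2*δ) w = (⌊(w + b) / δ⌋ + 2) % 4 := by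
  unfold jb
  have : (w + (b + 2*δ)) / δ = (w + b) / δ + (2 : ℤ) := by
    push_cast
    field_simp
    ring
  rw [this, Int.floor_add_intCast]

lemma mismatch_periodic (δ u v : ℝ) (hδ : δ ≠ 0) (b : ℝ) :
    Mismatch1 δ (b + 2*δ) u v ↔ Mismatch1 δ b u v := by
  unfold Mismatch1
  rw [jb_add δ b u hδ, jb_add δ b v hδ]
  unfold jb
  generalize ⌊(u + b) / δ⌋ = m
  generalize ⌊(v + b) / δ⌋ = n
  omega

lemma key (δ u t : ℝ) (hδ : 0 < δ) (ht1 : δ < t) (ht2 : t < 2 * δ) :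
    unifB δ {b | Mismatch1 δ b u (u + t)} = ENNReal.ofReal ((t - δ) / (2 * δ)) := by
  set S := {b : ℝ | Mismatch1 δ b u (u + t)} with hSdef
  have hS : MeasurableSet S := measurableSet_mismatch1 δ u (u + t)
  -- characterization on the shifted window
  have hchar : S ∩ Set.Ioc (-u) (-u + 2*δ) = Set.Ico (2*δ - t - u) (δ - u) := by
    ext b
    simp only [hSdef, Set.mem_inter_iff, Set.mem_setOf_eq, Set.mem_Ioc, Set.mem_Ico]
    constructor
    · rintro ⟨hm, hb1, hb2⟩
      have hx1 : 0 < u + b := by linarith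
      have hx2 : u + b ≤ 2 * δ := by linarith
      have hn0 : 0 ≤ ⌊(u + b) / δ⌋ := Int.floor_nonneg.2 (by positivity)
      have hn2 : ⌊(u + b) / δ⌋ ≤ 2 := by
        have h3 : (u + b) / δ < ((3:ℤ):ℝ) := by push_cast; rw [div_lt_iff₀ hδ]; linarith
        have := Int.floor_lt.2 h3
        omega
      have hm1 : 1 ≤ ⌊(u + t + b) / δ⌋ := by
        refine Int.le_floor.2 ?_
        push_cast
        rw [le_div_iff₀ hδ]; linarith
      have hm3 : ⌊(u + t + b) / δ⌋ ≤ 3 := by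
        have h4 : (u + t + b) / δ < ((4:ℤ):ℝ) := by push_cast; rw [div_lt_iff₀ hδ]; linarith
        have := Int.floor_lt.2 h4
        omega
      unfold Mismatch1 jb at hm
      rcases hm with ⟨h1, h2⟩ | ⟨h1, h2⟩
      · have hn : ⌊(u + b) / δ⌋ = 0 := by omega
        have hm2 : ⌊(u + t + b) / δ⌋ = 2 := by omega
        have e1 : (u + b) / δ < 1 := (Int.floor_eq_zero_iff.1 hn).2
        have e2 := Int.floor_le ((u + t + b) / δ)
        rw [hm2] at e2
        push_cast at e2
        rw [div_lt_one hδ] at e1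
        rw [le_div_iff₀ hδ] at e2
        exact ⟨by linarith, by linarith⟩
      · exfalso; omega
    · rintro ⟨hb1, hb2⟩
      have hju : jb δ b u = 0 := by
        have : ⌊(u + b) / δ⌋ = 0 := by
          rw [Int.floor_eq_zero_iff]
          constructor
          · exact div_nonneg (by linarith) hδ.le
          · rw [div_lt_one hδ]; linarith
        simp [jb, this]
      have hjv : jb δ b (u + t) = 2 := by
        have : ⌊(u + t + b) / δ⌋ = 2 := by
          rw [Int.floor_eq_iff]
          push_cast
          constructor
          · rw [le_div_iff₀ hδ]; linarith
          · rw [div_lt_iff₀ hδ]; linarith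
        simp [jb, this]
      refine ⟨Or.inl ⟨hju, hjv⟩, by linarith, by linarith⟩
  -- periodicity of the indicator
  have hper : Function.Periodic (S.indicator fun _ => (1:ℝ)) (2*δ) := by
    intro b
    have hiff : b + 2*δ ∈ S ↔ b ∈ S := mismatch_periodic δ u (u+t) hδ.ne' b
    by_cases hb : b ∈ S
    · rw [Set.indicator_of_mem (hiff.2 hb), Set.indicator_of_mem hb]
    · rw [Set.indicator_of_notMem (fun h => hb (hiff.1 h)), Set.indicator_of_notMem hb]
  have hint : ∀ a : ℝ, ∫ x in a..(a + 2*δ), S.indicator (fun _ => (1:ℝ)) x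
      = (volume (S ∩ Set.Ioc a (a + 2*δ))).toReal := by
    intro a
    rw [intervalIntegral.integral_of_le (by linarith), integral_indicator hS,
      setIntegral_const, measureReal_def, Measure.restrict_apply hS]
    simp
  have hIoc : volume (S ∩ Set.Ioc 0 (2*δ)) = ENNReal.ofReal (t - δ) := by
    have hfin : ∀ a : ℝ, volume (S ∩ Set.Ioc a (a + 2*δ)) ≠ ⊤ := fun a =>
      ((measure_mono Set.inter_subset_right).trans_lt measure_Ioc_lt_top).ne
    have h1 : volume (S ∩ Set.Ioc 0 (0 + 2*δ)) = volume (S ∩ Set.Ioc (-u) (-u + 2*δ)) := by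
      have := (hint 0).symm.trans ((hper.intervalIntegral_add_eq 0 (-u)).trans (hint (-u)))
      exact (ENNReal.toReal_eq_toReal_iff' (hfin 0) (hfin (-u))).1 this
    rw [zero_add] at h1
    rw [h1, hchar, Real.volume_Ico]
    congr 1
    ring
  have hIoo : volume (S ∩ Set.Ioo 0 (2*δ)) = ENNReal.ofReal (t - δ) := by
    refine le_antisymm ?_ ?_
    · rw [← hIoc]
      exact measure_mono (Set.inter_subset_inter_right _ Set.Ioo_subset_Ioc_self)
    · rw [← hIoc]
      calc volume (S ∩ Set.Ioc 0 (2*δ))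
          ≤ volume ((S ∩ Set.Ioo 0 (2*δ)) ∪ {2*δ}) := by
            refine measure_mono ?_
            rintro x ⟨hx, hx1, hx2⟩
            rcases eq_or_lt_of_le hx2 with h | h
            · exact Or.inr h
            · exact Or.inl ⟨hx, hx1, h⟩
        _ ≤ volume (S ∩ Set.Ioo 0 (2*δ)) + volume ({2*δ} : Set ℝ) := measure_union_le _ _
        _ = volume (S ∩ Set.Ioo 0 (2*δ)) := by rw [Real.volume_singleton, add_zero]
  show unifB δ S = _
  rw [unifB, Measure.smul_apply, Measure.restrict_apply hS, hIoo, smul_eq_mul,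
    ENNReal.ofReal_div_of_pos (by linarith), div_eq_mul_inv, mul_comm]

/-- for `δ < |u - v| < 2δ`, the one-dimensional mismatch probability
equals `(|u - v| - δ)/(2δ)`. -/
theorem psiBar_eq_of_between (δ u v : ℝ) (hδ : 0 < δ)
    (h1 : δ < |u - v|) (h2 : |u - v| < 2 * δ) :
    psiBar δ u v = ENNReal.ofReal ((|u - v| - δ) / (2 * δ)) := by
  unfold psiBar
  rcases le_total u v with h | h
  · have habs : |u - v| = v - u := by rw [abs_of_nonpos (by linarith)]; ring
    rw [habs] at h1 h2 ⊢
    have hk := key δ u (v - u) hδ h1 h2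
    have h' : u + (v - u) = v := by ring
    rw [h'] at hk
    exact hk
  · have habs : |u - v| = u - v := abs_of_nonneg (by linarith)
    rw [habs] at h1 h2 ⊢
    have hsymm : {b : ℝ | Mismatch1 δ b u v} = {b | Mismatch1 δ b v u} := by
      ext b; simp only [Set.mem_setOf_eq, Mismatch1]; tauto
    rw [hsymm]
    have hk := key δ v (u - v) hδ h1 h2
    have h' : v + (u - v) = u := by ring
    rw [h'] at hk
    exact hk


end
end

section
/- Let δ > 0 and let u, v ∈ ℝ with |u − v| > δ. Then the probability over b uniform on (0, 2δ) that u and v mismatch satisfies ψ̄(u, v) ≤ (|u − v| − δ)/(2δ). -/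
open MeasureTheory ProbabilityTheory Real
open scoped ENNReal

noncomputable section

lemma key_interval_bound (a L T : ℝ) (hL : 0 < L) (hLT : L ≤ T) :
    max (min (a + L) T - max a 0) 0 + max (min (a + T + L) T - max (a + T) 0) 0 ≤ L := by
  rcases max_cases a 0 with ⟨h1, h1'⟩ | ⟨h1, h1'⟩ <;>
  rcases max_cases (a + T) 0 with ⟨h2, h2'⟩ | ⟨h2, h2'⟩ <;>
  rcases min_cases (a + L) T with ⟨h3, h3'⟩ | ⟨h3, h3'⟩ <;>
  rcases min_cases (a + T + L) T with ⟨h4, h4'⟩ | ⟨h4, h4'⟩ <;>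
  rcases max_cases (min (a + L) T - max a 0) 0 with ⟨h5, h5'⟩ | ⟨h5, h5'⟩ <;>
  rcases max_cases (min (a + T + L) T - max (a + T) 0) 0 with ⟨h6, h6'⟩ | ⟨h6, h6'⟩ <;>
  linarith

lemma mismatch_floor (δ p w b : ℝ) (hδ : 0 < δ) (hw : δ < w) (hw3 : w < 3*δ)
    (hm : Mismatch1 δ b p (p + w)) :
    ∃ m : ℤ, m % 2 = 0 ∧ δ*(m+2) - p - w ≤ b ∧ b < δ*(m+1) - p := by
  set m : ℤ := ⌊(p + b)/δ⌋ with hmdef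
  set n : ℤ := ⌊(p + w + b)/δ⌋ with hndef
  have hmf : (m:ℝ) ≤ (p+b)/δ := Int.floor_le _
  have hmf' : (p+b)/δ < m + 1 := Int.lt_floor_add_one _
  have hnf : (n:ℝ) ≤ (p+w+b)/δ := Int.floor_le _
  have hnf' : (p+w+b)/δ < n + 1 := Int.lt_floor_add_one _
  have hmod : (n - m) % 4 = 2 ∧ m % 2 = 0 := by
    rcases hm with ⟨h1, h2⟩ | ⟨h1, h2⟩ <;>
    · simp only [jb, ← hmdef, ← hndef] at h1 h2
      omega
  have hsplit : (p+w+b)/δ = (p+b)/δ + w/δ := by ring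
  have hq1 : (1:ℝ) < w/δ := (one_lt_div hδ).2 hw
  have hq3 : w/δ < 3 := (div_lt_iff₀ hδ).2 (by linarith)
  have hgt : (m:ℝ) < (n:ℝ) := by
    have : (n:ℝ) > (p+w+b)/δ - 1 := by linarith
    rw [hsplit] at this
    linarith
  have hlt : (n:ℝ) < (m:ℝ) + 4 := by
    rw [hsplit] at hnf
    linarith
  have hgt' : m < n := by exact_mod_cast hgt
  have hlt' : n < m + 4 := by exact_mod_cast hlt
  have hn2 : n = m + 2 := by omega
  refine ⟨m, hmod.2, ?_, ?_⟩
  · have : ((m:ℝ) + 2) ≤ (p+w+b)/δ := by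
      rw [hn2] at hnf; push_cast at hnf; linarith
    have := (le_div_iff₀ hδ).1 this
    linarith
  · have := (div_lt_iff₀ hδ).1 hmf'
    linarith

lemma volume_mismatch_le (δ p w : ℝ) (hδ : 0 < δ) (hw : δ < w) :
    volume ({b | Mismatch1 δ b p (p + w)} ∩ Set.Ioo 0 (2*δ)) ≤ ENNReal.ofReal (w - δ) := by
  rcases le_or_gt (3*δ) w with h3 | h3
  · calc volume ({b | Mismatch1 δ b p (p + w)} ∩ Set.Ioo 0 (2*δ))
        ≤ volume (Set.Ioo 0 (2*δ)) := measure_mono Set.inter_subset_right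
      _ = ENNReal.ofReal (2*δ - 0) := Real.volume_Ioo
      _ ≤ ENNReal.ofReal (w - δ) := ENNReal.ofReal_le_ofReal (by linarith)
  · set q : ℤ := ⌊(p/δ - 1)/2⌋ with hq
    set a : ℝ := δ*(2*q+4) - p - w with ha
    set L : ℝ := w - δ with hL
    have hqle : (q:ℝ) ≤ (p/δ - 1)/2 := Int.floor_le _
    have hqlt : (p/δ - 1)/2 < q + 1 := Int.lt_floor_add_one _
    have hsub : {b | Mismatch1 δ b p (p + w)} ∩ Set.Ioo 0 (2*δ) ⊆
        Set.Ico (max a 0) (min (a+L) (2*δ)) ∪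
        Set.Ico (max (a+2*δ) 0) (min (a+2*δ+L) (2*δ)) := by
      rintro b ⟨hmis, hb0, hb2⟩
      obtain ⟨m, hm2, hba, hbe⟩ := mismatch_floor δ p w b hδ hw h3 hmis
      obtain ⟨k, hk⟩ : ∃ k : ℤ, m = 2*k := ⟨m / 2, by omega⟩
      -- bounds on m from b ∈ (0, 2δ)
      have hmlow : p/δ - 1 < (m:ℝ) := by
        have h1 : p/δ < (m:ℝ) + 1 := (div_lt_iff₀ hδ).2 (by nlinarith)
        linarith
      have hmhigh : (m:ℝ) < p/δ + 3 := by
        have h1 : (m:ℝ) < (p+w)/δ := (lt_div_iff₀ hδ).2 (by nlinarith)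
        have h2 : (p+w)/δ = p/δ + w/δ := by ring
        have h3' : w/δ < 3 := (div_lt_iff₀ hδ).2 (by linarith)
        linarith
      have hkcast : (m:ℝ) = 2*(k:ℝ) := by exact_mod_cast congrArg (Int.cast : ℤ → ℝ) hk
      have hklow : (q:ℝ) < (k:ℝ) := by linarith
      have hkhigh : (k:ℝ) < (q:ℝ) + 3 := by linarith
      have hklow' : q < k := by exact_mod_cast hklow
      have hkhigh' : k < q + 3 := by exact_mod_cast hkhigh
      have hk12 : k = q + 1 ∨ k = q + 2 := by omega
      rcases hk12 with hk1 | hk1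
      · left
        have hme : (m:ℝ) = 2*(q:ℝ) + 2 := by rw [hkcast]; push_cast [hk1]; ring
        constructor
        · exact max_le (by rw [ha]; rw [hme] at hba; linarith) (le_of_lt hb0)
        · refine lt_min ?_ hb2
          rw [ha, hL]; rw [hme] at hbe; linarith
      · right
        have hme : (m:ℝ) = 2*(q:ℝ) + 4 := by rw [hkcast]; push_cast [hk1]; ring
        constructor
        · exact max_le (by rw [ha]; rw [hme] at hba; linarith) (le_of_lt hb0)
        · refine lt_min ?_ hb2
          rw [ha, hL]; rw [hme] at hbe; linarith
    have hLpos : 0 < L := by rw [hL]; linarith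
    have hLT : L ≤ 2*δ := by rw [hL]; linarith
    calc volume ({b | Mismatch1 δ b p (p + w)} ∩ Set.Ioo 0 (2*δ))
        ≤ volume (Set.Ico (max a 0) (min (a+L) (2*δ)) ∪
            Set.Ico (max (a+2*δ) 0) (min (a+2*δ+L) (2*δ))) := measure_mono hsub
      _ ≤ volume (Set.Ico (max a 0) (min (a+L) (2*δ))) +
            volume (Set.Ico (max (a+2*δ) 0) (min (a+2*δ+L) (2*δ))) := measure_union_le _ _
      _ = ENNReal.ofReal (min (a+L) (2*δ) - max a 0) +
            ENNReal.ofReal (min (a+2*δ+L) (2*δ) - max (a+2*δ) 0) := by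
            rw [Real.volume_Ico, Real.volume_Ico]
      _ ≤ ENNReal.ofReal (max (min (a+L) (2*δ) - max a 0) 0) +
            ENNReal.ofReal (max (min (a+2*δ+L) (2*δ) - max (a+2*δ) 0) 0) :=
            add_le_add (ENNReal.ofReal_le_ofReal (le_max_left _ _))
              (ENNReal.ofReal_le_ofReal (le_max_left _ _))
      _ = ENNReal.ofReal (max (min (a+L) (2*δ) - max a 0) 0 +
            max (min (a+2*δ+L) (2*δ) - max (a+2*δ) 0) 0) :=
            (ENNReal.ofReal_add (le_max_right _ _) (le_max_right _ _)).symm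
      _ ≤ ENNReal.ofReal L := by
            refine ENNReal.ofReal_le_ofReal ?_
            have := key_interval_bound a L (2*δ) hLpos hLT
            calc max (min (a+L) (2*δ) - max a 0) 0 +
                  max (min (a+2*δ+L) (2*δ) - max (a+2*δ) 0) 0
                = max (min (a+L) (2*δ) - max a 0) 0 +
                  max (min (a+(2*δ)+L) (2*δ) - max (a+(2*δ)) 0) 0 := by ring_nf
              _ ≤ L := key_interval_bound a L (2*δ) hLpos hLT
      _ = ENNReal.ofReal (w - δ) := by rw [hL]

/-- for `|u - v| > δ`, the one-dimensional mismatch probability is at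
most `(|u - v| - δ)/(2δ)`. -/
theorem psiBar_le_of_far (δ u v : ℝ) (hδ : 0 < δ) (h : δ < |u - v|) :
    psiBar δ u v ≤ ENNReal.ofReal ((|u - v| - δ) / (2 * δ)) := by
  set w := |u - v| with hwdef
  obtain ⟨p, hpv⟩ : ∃ p, {b | Mismatch1 δ b u v} = {b | Mismatch1 δ b p (p + w)} := by
    rcases le_total u v with huv | huv
    · refine ⟨u, ?_⟩
      have huw : u + w = v := by rw [hwdef, abs_sub_comm, abs_of_nonneg (by linarith)]; ring
      rw [huw]
    · refine ⟨v, ?_⟩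
      have hvw : v + w = u := by rw [hwdef, abs_of_nonneg (by linarith)]; ring
      rw [hvw]
      ext b
      simp only [Set.mem_setOf_eq, Mismatch1]
      tauto
  have h1 : psiBar δ u v =
      (ENNReal.ofReal (2*δ))⁻¹ * volume ({b | Mismatch1 δ b p (p+w)} ∩ Set.Ioo 0 (2*δ)) := by
    rw [psiBar, unifB, Measure.smul_apply, Measure.restrict_apply' measurableSet_Ioo, hpv,
      smul_eq_mul]
  rw [h1]
  calc (ENNReal.ofReal (2*δ))⁻¹ * volume ({b | Mismatch1 δ b p (p+w)} ∩ Set.Ioo 0 (2*δ))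
      ≤ (ENNReal.ofReal (2*δ))⁻¹ * ENNReal.ofReal (w - δ) :=
        mul_le_mul_right (volume_mismatch_le δ p w hδ h) _
    _ = ENNReal.ofReal ((w - δ) / (2*δ)) := by
        rw [ENNReal.ofReal_div_of_pos (by linarith), ENNReal.div_eq_inv_mul]

end
end
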